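/- arXiv:1910.11098 — 8 statements merged into one kernel-verified Lean document; each statement's English description precedes it below -/
import Mathlib

section
/- If a^2 + 108 ≠ 0 in a field K of odd characteristic, then the polynomial X^6 - aX^5 - 33X^4 + 2aX^3 - 33X^2 - aX + 1 has no multiple roots in an algebraic closure of K. -/
open Polynomial

set_option maxHeartbeats 4000000 in
/-- If `a^2 + 108 ≠ 0` in a field `K` of odd characteristic, then
`X^6 - aX^5 - 33X^4 + 2aX^3 - 33X^2 - aX + 1` has no multiple roots in an algebraic
closure of `K`. -/
theorem stmt_1 (K : Type*) [Field K] (h2 : (2 : K) ≠ 0) (a : K) (ha : a ^ 2 + 108 ≠ 0)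
    (f : Polynomial K)
    (hf : f = X ^ 6 - C a * X ^ 5 - 33 * X ^ 4 + 2 * C a * X ^ 3 - 33 * X ^ 2 - C a * X + 1) :
    ∀ z : AlgebraicClosure K,
      (f.map (algebraMap K (AlgebraicClosure K))).rootMultiplicity z ≤ 1 := by
  have hD : (1048576 * (a ^ 2 + 108) ^ 4 : K) ≠ 0 := by
    have h2' : (1048576 : K) ≠ 0 := by
      have := pow_ne_zero 20 h2
      simpa [show ((2 : K)) ^ 20 = 1048576 by norm_num] using this
    exact mul_ne_zero h2' (pow_ne_zero _ ha)
  have hder : derivative f =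
      6 * X ^ 5 - 5 * C a * X ^ 4 - 132 * X ^ 3 + 6 * C a * X ^ 2 - 66 * X - C a := by
    rw [hf]
    simp only [derivative_add, derivative_sub, derivative_mul, derivative_pow, derivative_X,
      derivative_C, derivative_one, derivative_ofNat, map_ofNat, Nat.cast_ofNat]
    ring
  set b : K[X] := C a with hb
  have key : (142657607172096 + 3967871090688*b^2 + 36835098624*b^4 + 114573312*b^6 + 4096*b^8 + (-11661103595520)*b*X + (-323919544320)*b^3*X + (-2999255040)*b^5*X + (-9256960)*b^7*X + 254046945411072*X^2 + 7031060692992*b^2*X^2 + 64624656384*b^4*X^2 + 195035136*b^6*X^2 + (-20480)*b^8*X^2 + 9679747940352*b*X^3 + 268881887232*b^3*X^3 + 2489647104*b^5*X^3 + 7684096*b^7*X^3 + (-11578547109888)*X^4 + (-321626308608)*b^2*X^4 + (-2978021376)*b^4*X^4 + (-9191424)*b^6*X^4) * f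
      + ((-1315743989760)*b + (-36548444160)*b^3 + (-338411520)*b^5 + (-1044480)*b^7 + (-67479607443456)*X + (-1879593320448)*b^2*X + (-17499193344)*b^4*X + (-54894592)*b^6*X + (-4096)*b^8*X + 3911113506816*b*X^2 + 108642041856*b^3*X^2 + 1005944832*b^5*X^2 + 3104768*b^7*X^2 + (-63568493936640)*X^3 + (-1760631717888)*b^2*X^3 + (-16206594048)*b^4*X^3 + (-49135616)*b^6*X^3 + 4096*b^8*X^3 + (-1934917632000)*b*X^4 + (-53747712000)*b^3*X^4 + (-497664000)*b^5*X^4 + (-1536000)*b^7*X^4 + 1929757851648*X^5 + 53604384768*b^2*X^5 + 496336896*b^4*X^5 + 1531904*b^6*X^5) * derivative f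
      = C (1048576 * (a ^ 2 + 108) ^ 4) := by
    rw [hder, hf, hb]
    simp only [map_mul, map_pow, map_add, map_ofNat]
    ring
  have hCC : (C (1048576 * (a ^ 2 + 108) ^ 4)⁻¹ : K[X]) * C (1048576 * (a ^ 2 + 108) ^ 4) = 1 := by
    rw [← C_mul, inv_mul_cancel₀ hD, C_1]
  have hsep : f.Separable := by
    refine ⟨C (1048576 * (a ^ 2 + 108) ^ 4)⁻¹ * (142657607172096 + 3967871090688*b^2 + 36835098624*b^4 + 114573312*b^6 + 4096*b^8 + (-11661103595520)*b*X + (-323919544320)*b^3*X + (-2999255040)*b^5*X + (-9256960)*b^7*X + 254046945411072*X^2 + 7031060692992*b^2*X^2 + 64624656384*b^4*X^2 + 195035136*b^6*X^2 + (-20480)*b^8*X^2 + 9679747940352*b*X^3 + 268881887232*b^3*X^3 + 2489647104*b^5*X^3 + 7684096*b^7*X^3 + (-11578547109888)*X^4 + (-321626308608)*b^2*X^4 + (-2978021376)*b^4*X^4 + (-9191424)*b^6*X^4),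
      C (1048576 * (a ^ 2 + 108) ^ 4)⁻¹ * ((-1315743989760)*b + (-36548444160)*b^3 + (-338411520)*b^5 + (-1044480)*b^7 + (-67479607443456)*X + (-1879593320448)*b^2*X + (-17499193344)*b^4*X + (-54894592)*b^6*X + (-4096)*b^8*X + 3911113506816*b*X^2 + 108642041856*b^3*X^2 + 1005944832*b^5*X^2 + 3104768*b^7*X^2 + (-63568493936640)*X^3 + (-1760631717888)*b^2*X^3 + (-16206594048)*b^4*X^3 + (-49135616)*b^6*X^3 + 4096*b^8*X^3 + (-1934917632000)*b*X^4 + (-53747712000)*b^3*X^4 + (-497664000)*b^5*X^4 + (-1536000)*b^7*X^4 + 1929757851648*X^5 + 53604384768*b^2*X^5 + 496336896*b^4*X^5 + 1531904*b^6*X^5), ?_⟩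
    linear_combination (C (1048576 * (a ^ 2 + 108) ^ 4)⁻¹ : K[X]) * key + hCC
  intro z
  exact rootMultiplicity_le_one_of_separable (hsep.map) z
end

section
/- In PGL(2,K) over a field K of odd characteristic containing i with i^2 = -1, the subgroup generated by θ₁ : x ↦ -x and θ₂ : x ↦ (x-i)/(x+i) is isomorphic to the alternating group A₄. -/
open Matrix
open scoped MatrixGroups

/-- `PGL(2,K)`: the quotient of `GL(2,K)` by its center. -/
abbrev PGL2 (K : Type*) [Field K] :=
  GL (Fin 2) K ⧸ Subgroup.center (GL (Fin 2) K)


theorem twelve {G : Type*} [Group G] (s t : G) (hss : s*s = 1) (ht3 : t*(t*t) = 1)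
    (hkey : t*(s*(t*(s*t))) = s) :
    ∀ x ∈ Subgroup.closure {s, t},
      x = 1 ∨ x = t ∨ x = t*t ∨ x = s ∨ x = s*t ∨ x = s*(t*t) ∨
      x = t*(s*(t*t)) ∨ x = (t*(s*(t*t)))*t ∨ x = (t*(s*(t*t)))*(t*t) ∨
      x = s*(t*(s*(t*t))) ∨ x = s*((t*(s*(t*t)))*t) ∨ x = s*((t*(s*(t*t)))*(t*t)) := by
  set y := t*(s*(t*t)) with hy
  have hss' : ∀ z : G, s*(s*z) = z := fun z => by rw [← mul_assoc, hss, one_mul]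
  -- master identities
  have E2 : t*s = y*t := by
    have : y*t = t*(s*(t*(t*t))) := by rw [hy]; group
    rw [this, ht3, mul_one]
  have Estar : t*(t*s) = s*(t*(s*t)) := by
    have h1 : s*(t*(s*t)) = (t*(t*t))*(s*(t*(s*t))) := by rw [ht3, one_mul]
    rw [h1]
    have h2 : (t*(t*t))*(s*(t*(s*t))) = t*(t*(t*(s*(t*(s*t))))) := by group
    rw [h2, hkey]
  have E3 : t*y = s*(y*t) := by
    have h1 : t*y = (t*(t*s))*(t*t) := by rw [hy]; group
    rw [h1, Estar]
    rw [hy]; group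
  have E4 : t*(s*y) = s*t := by
    have h1 : t*(s*y) = (t*(s*(t*(s*t))))*t := by rw [hy]; group
    rw [h1, hkey]
  have Hs : ∀ z : G, (z = 1 ∨ z = t ∨ z = t*t ∨ z = s ∨ z = s*t ∨ z = s*(t*t) ∨ z = t*(s*(t*t)) ∨ z = (t*(s*(t*t)))*t ∨ z = (t*(s*(t*t)))*(t*t) ∨ z = s*(t*(s*(t*t))) ∨ z = s*((t*(s*(t*t)))*t) ∨ z = s*((t*(s*(t*t)))*(t*t))) → ((s*z) = 1 ∨ (s*z) = t ∨ (s*z) = t*t ∨ (s*z) = s ∨ (s*z) = s*t ∨ (s*z) = s*(t*t) ∨ (s*z) = t*(s*(t*t)) ∨ (s*z) = (t*(s*(t*t)))*t ∨ (s*z) = (t*(s*(t*t)))*(t*t) ∨ (s*z) = s*(t*(s*(t*t))) ∨ (s*z) = s*((t*(s*(t*t)))*t) ∨ (s*z) = s*((t*(s*(t*t)))*(t*t))) := by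
    intro z ih
    rcases ih with rfl|rfl|rfl|rfl|rfl|rfl|rfl|rfl|rfl|rfl|rfl|rfl
    · exact Or.inr (Or.inr (Or.inr (Or.inl (mul_one s))))
    · exact Or.inr (Or.inr (Or.inr (Or.inr (Or.inl rfl))))
    · exact Or.inr (Or.inr (Or.inr (Or.inr (Or.inr (Or.inl rfl)))))
    · exact Or.inl hss
    · exact Or.inr (Or.inl (hss' t))
    · exact Or.inr (Or.inr (Or.inl (hss' _)))
    · exact Or.inr (Or.inr (Or.inr (Or.inr (Or.inr (Or.inr (Or.inr (Or.inr (Or.inr (Or.inl rfl)))))))))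
    · exact Or.inr (Or.inr (Or.inr (Or.inr (Or.inr (Or.inr (Or.inr (Or.inr (Or.inr (Or.inr (Or.inl rfl))))))))))
    · exact Or.inr (Or.inr (Or.inr (Or.inr (Or.inr (Or.inr (Or.inr (Or.inr (Or.inr (Or.inr (Or.inr rfl))))))))))
    · exact Or.inr (Or.inr (Or.inr (Or.inr (Or.inr (Or.inr (Or.inl (hss' _)))))))
    · exact Or.inr (Or.inr (Or.inr (Or.inr (Or.inr (Or.inr (Or.inr (Or.inl (hss' _))))))))
    · exact Or.inr (Or.inr (Or.inr (Or.inr (Or.inr (Or.inr (Or.inr (Or.inr (Or.inl (hss' _)))))))))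
  have Ht : ∀ z : G, (z = 1 ∨ z = t ∨ z = t*t ∨ z = s ∨ z = s*t ∨ z = s*(t*t) ∨ z = t*(s*(t*t)) ∨ z = (t*(s*(t*t)))*t ∨ z = (t*(s*(t*t)))*(t*t) ∨ z = s*(t*(s*(t*t))) ∨ z = s*((t*(s*(t*t)))*t) ∨ z = s*((t*(s*(t*t)))*(t*t))) → ((t*z) = 1 ∨ (t*z) = t ∨ (t*z) = t*t ∨ (t*z) = s ∨ (t*z) = s*t ∨ (t*z) = s*(t*t) ∨ (t*z) = t*(s*(t*t)) ∨ (t*z) = (t*(s*(t*t)))*t ∨ (t*z) = (t*(s*(t*t)))*(t*t) ∨ (t*z) = s*(t*(s*(t*t))) ∨ (t*z) = s*((t*(s*(t*t)))*t) ∨ (t*z) = s*((t*(s*(t*t)))*(t*t))) := by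
    intro z ih
    rcases ih with rfl|rfl|rfl|rfl|rfl|rfl|rfl|rfl|rfl|rfl|rfl|rfl
    · exact Or.inr (Or.inl (mul_one t))
    · exact Or.inr (Or.inr (Or.inl rfl))
    · exact Or.inl ht3
    · exact Or.inr (Or.inr (Or.inr (Or.inr (Or.inr (Or.inr (Or.inr (Or.inl E2)))))))
    · refine Or.inr (Or.inr (Or.inr (Or.inr (Or.inr (Or.inr (Or.inr (Or.inr (Or.inl ?_))))))))
      calc t*(s*t) = (t*s)*t := by group
      _ = (y*t)*t := by rw [E2]
      _ = y*(t*t) := by group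
    · exact Or.inr (Or.inr (Or.inr (Or.inr (Or.inr (Or.inr (Or.inl rfl))))))
    · exact Or.inr (Or.inr (Or.inr (Or.inr (Or.inr (Or.inr (Or.inr (Or.inr (Or.inr (Or.inr (Or.inl E3))))))))))
    · refine Or.inr (Or.inr (Or.inr (Or.inr (Or.inr (Or.inr (Or.inr (Or.inr (Or.inr (Or.inr (Or.inr ?_)))))))))); 
      calc t*(y*t) = (t*y)*t := by group
      _ = (s*(y*t))*t := by rw [E3]
      _ = s*(y*(t*t)) := by group
    · refine Or.inr (Or.inr (Or.inr (Or.inr (Or.inr (Or.inr (Or.inr (Or.inr (Or.inr (Or.inl ?_)))))))))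
      calc t*(y*(t*t)) = (t*y)*(t*t) := by group
      _ = (s*(y*t))*(t*t) := by rw [E3]
      _ = s*(y*(t*(t*t))) := by group
      _ = s*(y*1) := by rw [ht3]
      _ = s*y := by rw [mul_one]
    · exact Or.inr (Or.inr (Or.inr (Or.inr (Or.inl E4))))
    · refine Or.inr (Or.inr (Or.inr (Or.inr (Or.inr (Or.inl ?_)))))
      calc t*(s*(y*t)) = (t*(s*y))*t := by group
      _ = (s*t)*t := by rw [E4]
      _ = s*(t*t) := by group
    · refine Or.inr (Or.inr (Or.inr (Or.inl ?_)))
      calc t*(s*(y*(t*t))) = (t*(s*y))*(t*t) := by group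
      _ = (s*t)*(t*t) := by rw [E4]
      _ = s*(t*(t*t)) := by group
      _ = s*1 := by rw [ht3]
      _ = s := by rw [mul_one]
  have hinvs : s⁻¹ = s := inv_eq_of_mul_eq_one_right hss
  have hinvt : t⁻¹ = t*t := inv_eq_of_mul_eq_one_right (by rw [← mul_assoc] at ht3 ⊢; rw [ht3])
  intro x hx
  induction hx using Subgroup.closure_induction_left with
  | one => exact Or.inl rfl
  | mul_left x hxs z hz ih =>
    simp only [Set.mem_insert_iff, Set.mem_singleton_iff] at hxs
    rcases hxs with hxe | hxe <;> rw [hxe]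
    · exact Hs z ih
    · exact Ht z ih
  | inv_mul_cancel x hxs z hz ih =>
    simp only [Set.mem_insert_iff, Set.mem_singleton_iff] at hxs
    rcases hxs with hxe | hxe <;> rw [hxe]
    · rw [hinvs]; exact Hs z ih
    · rw [hinvt, mul_assoc]; exact Ht _ (Ht z ih)


def σ4 : Equiv.Perm (Fin 4) := Equiv.swap 0 1 * Equiv.swap 2 3
def τ4 : Equiv.Perm (Fin 4) := Equiv.swap 0 2 * Equiv.swap 0 1

-- basic relations
example : σ4 * σ4 = 1 := by decide
example : τ4 * (τ4 * τ4) = 1 := by decide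
example : τ4 * (σ4 * (τ4 * (σ4 * τ4))) = σ4 := by decide

set_option maxHeartbeats 1000000 in
theorem key12 : ∀ x : Equiv.Perm (Fin 4), Equiv.Perm.sign x = 1 →
    (x = 1 ∨ x = τ4 ∨ x = τ4*τ4 ∨ x = σ4 ∨ x = σ4*τ4 ∨ x = σ4*(τ4*τ4) ∨
     x = τ4*(σ4*(τ4*τ4)) ∨ x = (τ4*(σ4*(τ4*τ4)))*τ4 ∨ x = (τ4*(σ4*(τ4*τ4)))*(τ4*τ4) ∨
     x = σ4*(τ4*(σ4*(τ4*τ4))) ∨ x = σ4*((τ4*(σ4*(τ4*τ4)))*τ4) ∨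
     x = σ4*((τ4*(σ4*(τ4*τ4)))*(τ4*τ4))) := by decide

set_option maxHeartbeats 4000000 in
set_option maxRecDepth 10000 in
theorem key4 : ∀ p : Equiv.Perm (Fin 4), Equiv.Perm.sign p = 1 → p ≠ 1 →
    ∃ c, Equiv.Perm.sign c = 1 ∧ ∃ d, Equiv.Perm.sign d = 1 ∧
      (d * (p * (c * p⁻¹ * c⁻¹)) * d⁻¹ = σ4 ∨ d * p * d⁻¹ = σ4) := by decide



lemma range_cond {M : Type*} (a c : M) : Set.range (fun b : Bool => cond b a c) = {a, c} := by
  ext x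
  constructor
  · rintro ⟨b, rfl⟩
    cases b
    · exact Or.inr rfl
    · exact Or.inl rfl
  · rintro (rfl | rfl)
    exacts [⟨true, rfl⟩, ⟨false, rfl⟩]

set_option maxHeartbeats 4000000 in
set_option maxRecDepth 10000 in
theorem main_aux {Γ : Type*} [Group Γ] (θ₁ θ₂ : Γ)
    (p1 : θ₁ * θ₁ = 1) (p2 : θ₂ * (θ₂ * θ₂) = 1)
    (p3 : θ₂ * (θ₁ * (θ₂ * (θ₁ * θ₂))) = θ₁) (hne : θ₁ ≠ 1) :
    Nonempty ((Subgroup.closure ({θ₁, θ₂} : Set Γ)) ≃* alternatingGroup (Fin 4)) := by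
  classical
  set s : Equiv.Perm (Fin 4) × Γ := (σ4, θ₁) with hs
  set t : Equiv.Perm (Fin 4) × Γ := (τ4, θ₂) with ht
  set f : FreeGroup Bool →* Equiv.Perm (Fin 4) := FreeGroup.lift (fun b => cond b σ4 τ4) with hfdef
  set g : FreeGroup Bool →* Γ := FreeGroup.lift (fun b => cond b θ₁ θ₂) with hgdef
  set h : FreeGroup Bool →* (Equiv.Perm (Fin 4) × Γ) := FreeGroup.lift (fun b => cond b s t) with hhdef
  have hf : ∀ u, (h u).1 = f u := by
    have he : (MonoidHom.fst _ _).comp h = f :=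
      FreeGroup.ext_hom _ _ (by rintro ⟨⟩ <;> simp [hfdef, hhdef, hs, ht])
    exact fun u => DFunLike.congr_fun he u
  have hg : ∀ u, (h u).2 = g u := by
    have he : (MonoidHom.snd _ _).comp h = g :=
      FreeGroup.ext_hom _ _ (by rintro ⟨⟩ <;> simp [hgdef, hhdef, hs, ht])
    exact fun u => DFunLike.congr_fun he u
  -- relations
  have hq1 : σ4 * σ4 = 1 := by decide
  have hq2 : τ4 * (τ4 * τ4) = 1 := by decide
  have hq3 : τ4 * (σ4 * (τ4 * (σ4 * τ4))) = σ4 := by decide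
  have hss : s * s = 1 := by
    rw [hs, Prod.mk_mul_mk, hq1, p1]; rfl
  have ht3 : t * (t * t) = 1 := by
    rw [ht, Prod.mk_mul_mk, Prod.mk_mul_mk, hq2, p2]; rfl
  have hkey : t * (s * (t * (s * t))) = s := by
    rw [hs, ht, Prod.mk_mul_mk, Prod.mk_mul_mk, Prod.mk_mul_mk, Prod.mk_mul_mk, hq3, p3]
  -- ranges
  have hrh : h.range = Subgroup.closure {s, t} := by
    rw [hhdef, FreeGroup.range_lift_eq_closure, range_cond]
  have hrg : g.range = Subgroup.closure {θ₁, θ₂} := by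
    rw [hgdef, FreeGroup.range_lift_eq_closure, range_cond]
  have hrf : f.range = Subgroup.closure {σ4, τ4} := by
    rw [hfdef, FreeGroup.range_lift_eq_closure, range_cond]
  -- kernel inclusion
  have hkerfg : f.ker ≤ g.ker := by
    intro u hu
    have hfu : f u = 1 := MonoidHom.mem_ker.mp hu
    have hT := twelve s t hss ht3 hkey (h u) (by rw [← hrh]; exact ⟨u, rfl⟩)
    rw [MonoidHom.mem_ker]
    rcases hT with he|he|he|he|he|he|he|he|he|he|he|he
    · rw [← hg u, he]; rfl
    all_goals {
      exfalso
      have h1 := congrArg Prod.fst he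
      rw [hf u, hfu] at h1
      simp only [hs, ht, Prod.fst_mul] at h1
      exact absurd h1 (by decide) }
  -- the lifted hom
  have hker' : ∀ u ∈ f.ker, g u = 1 := fun u hu => MonoidHom.mem_ker.mp (hkerfg hu)
  set ψ : (FreeGroup Bool ⧸ f.ker) →* Γ := QuotientGroup.lift f.ker g hker' with hψdef
  have hψmk : ∀ u, ψ (QuotientGroup.mk u) = g u := fun u => rfl
  have hrψ : ψ.range = Subgroup.closure {θ₁, θ₂} := by
    rw [← hrg]
    apply le_antisymm
    · rintro x ⟨q, rfl⟩
      obtain ⟨u, rfl⟩ := QuotientGroup.mk_surjective q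
      exact ⟨u, (hψmk u).symm⟩
    · rintro x ⟨u, rfl⟩
      exact ⟨QuotientGroup.mk u, hψmk u⟩
  -- f.range = A₄
  have hfrange : f.range = alternatingGroup (Fin 4) := by
    apply le_antisymm
    · rw [hrf, Subgroup.closure_le]
      rintro x hx
      simp only [Set.mem_insert_iff, Set.mem_singleton_iff] at hx
      rcases hx with rfl | rfl
      · exact Equiv.Perm.mem_alternatingGroup.mpr (by decide)
      · exact Equiv.Perm.mem_alternatingGroup.mpr (by decide)
    · intro x hx
      have hsx : Equiv.Perm.sign x = 1 := Equiv.Perm.mem_alternatingGroup.mp hx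
      rw [hrf]
      have hσ : σ4 ∈ Subgroup.closure ({σ4, τ4} : Set (Equiv.Perm (Fin 4))) :=
        Subgroup.subset_closure (Or.inl rfl)
      have hτ : τ4 ∈ Subgroup.closure ({σ4, τ4} : Set (Equiv.Perm (Fin 4))) :=
        Subgroup.subset_closure (Or.inr rfl)
      have hy := mul_mem hτ (mul_mem hσ (mul_mem hτ hτ))
      rcases key12 x hsx with rfl|rfl|rfl|rfl|rfl|rfl|rfl|rfl|rfl|rfl|rfl|rfl
      exacts [one_mem _, hτ, mul_mem hτ hτ, hσ, mul_mem hσ hτ, mul_mem hσ (mul_mem hτ hτ),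
        hy, mul_mem hy hτ, mul_mem hy (mul_mem hτ hτ), mul_mem hσ hy,
        mul_mem hσ (mul_mem hy hτ), mul_mem hσ (mul_mem hy (mul_mem hτ hτ))]
  -- ψ is injective
  have hψinj : Function.Injective ψ := by
    rw [← MonoidHom.ker_eq_bot_iff, Subgroup.eq_bot_iff_forall]
    intro q hq
    obtain ⟨u, rfl⟩ := QuotientGroup.mk_surjective q
    have hgu : g u = 1 := by rw [← hψmk u]; exact MonoidHom.mem_ker.mp hq
    rw [QuotientGroup.eq_one_iff]
    by_contra hcon
    have hp : f u ≠ 1 := fun e => hcon (MonoidHom.mem_ker.mpr e)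
    have hpsign : Equiv.Perm.sign (f u) = 1 := by
      have : f u ∈ f.range := ⟨u, rfl⟩
      rw [hfrange] at this
      exact Equiv.Perm.mem_alternatingGroup.mp this
    obtain ⟨c, hc, d, hd, hcase⟩ := key4 (f u) hpsign hp
    obtain ⟨v, hv⟩ : ∃ v, f v = c := by
      have : c ∈ f.range := by rw [hfrange]; exact Equiv.Perm.mem_alternatingGroup.mpr hc
      exact this
    obtain ⟨w, hw⟩ : ∃ w, f w = d := by
      have : d ∈ f.range := by rw [hfrange]; exact Equiv.Perm.mem_alternatingGroup.mpr hd
      exact this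
    have hgof : g (FreeGroup.of true) = θ₁ := by simp [hgdef]
    rcases hcase with hcase | hcase
    · set z := w * (u * (v * u⁻¹ * v⁻¹)) * w⁻¹ with hz
      have hfz : f z = σ4 := by
        rw [hz]; simp only [_root_.map_mul, _root_.map_inv, hv, hw]; exact hcase
      have hgz : g z = 1 := by
        rw [hz]; simp only [_root_.map_mul, _root_.map_inv, hgu]; group
      have hzk : z * (FreeGroup.of true)⁻¹ ∈ f.ker := by
        rw [MonoidHom.mem_ker, _root_.map_mul, _root_.map_inv, hfz]
        simp [hfdef]
      have hfin := MonoidHom.mem_ker.mp (hkerfg hzk)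
      rw [_root_.map_mul, _root_.map_inv, hgz, hgof, one_mul, inv_eq_one] at hfin
      exact hne hfin
    · set z := w * u * w⁻¹ with hz
      have hfz : f z = σ4 := by
        rw [hz]; simp only [_root_.map_mul, _root_.map_inv, hw]; exact hcase
      have hgz : g z = 1 := by
        rw [hz]; simp only [_root_.map_mul, _root_.map_inv, hgu]; group
      have hzk : z * (FreeGroup.of true)⁻¹ ∈ f.ker := by
        rw [MonoidHom.mem_ker, _root_.map_mul, _root_.map_inv, hfz]
        simp [hfdef]
      have hfin := MonoidHom.mem_ker.mp (hkerfg hzk)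
      rw [_root_.map_mul, _root_.map_inv, hgz, hgof, one_mul, inv_eq_one] at hfin
      exact hne hfin
  -- assemble
  have e1 : alternatingGroup (Fin 4) ≃* f.range := MulEquiv.subgroupCongr hfrange.symm
  have e2 : (FreeGroup Bool ⧸ f.ker) ≃* f.range := QuotientGroup.quotientKerEquivRange f
  have e3 : (FreeGroup Bool ⧸ f.ker) ≃* ψ.range :=
    MulEquiv.ofBijective ψ.rangeRestrict
      ⟨fun a b hab => hψinj (by
          have := congrArg Subtype.val hab
          simpa [MonoidHom.coe_rangeRestrict] using this),
        ψ.rangeRestrict_surjective⟩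
  have e4 : ψ.range ≃* Subgroup.closure ({θ₁, θ₂} : Set Γ) := MulEquiv.subgroupCongr hrψ
  exact ⟨(((e1.trans e2.symm).trans e3).trans e4).symm⟩


lemma scalar_mem_center {K : Type*} [Field K] (U : GL (Fin 2) K) (c : K)
    (h : (U : Matrix (Fin 2) (Fin 2) K) = c • (1 : Matrix (Fin 2) (Fin 2) K)) :
    U ∈ Subgroup.center (GL (Fin 2) K) := by
  rw [Subgroup.mem_center_iff]
  intro B
  apply Units.ext
  simp only [Units.val_mul, h, Matrix.mul_smul, Matrix.smul_mul, Matrix.mul_one, Matrix.one_mul]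


/-- In `PGL(2,K)`, over a field `K` of odd characteristic containing `i` with
`i² = -1`, the subgroup generated by the Möbius transformations `θ₁ : x ↦ -x`
(matrix `[[-1,0],[0,1]]`) and `θ₂ : x ↦ (x-i)/(x+i)` (matrix `[[1,-i],[1,i]]`) is
isomorphic to the alternating group `A₄`. -/
theorem stmt_5 (K : Type*) [Field K] (h2 : (2 : K) ≠ 0) (i : K) (hi : i ^ 2 = -1)
    (h₁ : (!![(-1 : K), 0; 0, 1]).det ≠ 0) (h₂ : (!![(1 : K), -i; 1, i]).det ≠ 0) :
    Nonempty
      ((Subgroup.closure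
        ({(QuotientGroup.mk (Matrix.GeneralLinearGroup.mkOfDetNeZero _ h₁) : PGL2 K),
          (QuotientGroup.mk (Matrix.GeneralLinearGroup.mkOfDetNeZero _ h₂) : PGL2 K)} :
          Set (PGL2 K))) ≃* alternatingGroup (Fin 4)) := by
  have h3 : i ^ 3 = -i := by rw [pow_succ, hi]; ring
  set u₁ : GL (Fin 2) K := Matrix.GeneralLinearGroup.mkOfDetNeZero _ h₁ with hu₁
  set u₂ : GL (Fin 2) K := Matrix.GeneralLinearGroup.mkOfDetNeZero _ h₂ with hu₂
  set θ₁ : PGL2 K := QuotientGroup.mk u₁ with hθ₁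
  set θ₂ : PGL2 K := QuotientGroup.mk u₂ with hθ₂
  have p1 : θ₁ * θ₁ = 1 := by
    rw [hθ₁, ← QuotientGroup.mk_mul, QuotientGroup.eq_one_iff]
    apply scalar_mem_center _ (1 : K)
    show (!![(-1 : K), 0; 0, 1] * !![(-1 : K), 0; 0, 1]) = _
    ext a b
    fin_cases a <;> fin_cases b <;>
      simp [Matrix.mul_apply, Fin.sum_univ_succ, Matrix.one_apply]
  have p2 : θ₂ * (θ₂ * θ₂) = 1 := by
    rw [hθ₂, ← QuotientGroup.mk_mul, ← QuotientGroup.mk_mul, QuotientGroup.eq_one_iff]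
    apply scalar_mem_center _ (2 - 2*i : K)
    show (!![(1 : K), -i; 1, i] * (!![(1 : K), -i; 1, i] * !![(1 : K), -i; 1, i])) = _
    ext a b
    fin_cases a <;> fin_cases b <;>
      simp [Matrix.mul_apply, Fin.sum_univ_succ, Matrix.one_apply] <;> ring_nf <;>
      simp [hi, h3] <;> ring_nf
  have p3' : θ₁ * (θ₂ * (θ₁ * (θ₂ * (θ₁ * θ₂)))) = 1 := by
    rw [hθ₁, hθ₂, ← QuotientGroup.mk_mul, ← QuotientGroup.mk_mul, ← QuotientGroup.mk_mul,
      ← QuotientGroup.mk_mul, ← QuotientGroup.mk_mul, QuotientGroup.eq_one_iff]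
    apply scalar_mem_center _ (-2 - 2*i : K)
    show (!![(-1 : K), 0; 0, 1] * (!![(1 : K), -i; 1, i] * (!![(-1 : K), 0; 0, 1] *
      (!![(1 : K), -i; 1, i] * (!![(-1 : K), 0; 0, 1] * !![(1 : K), -i; 1, i]))))) = _
    ext a b
    fin_cases a <;> fin_cases b <;>
      simp [Matrix.mul_apply, Fin.sum_univ_succ, Matrix.one_apply] <;> ring_nf <;>
      simp [hi, h3] <;> ring_nf
  have p3 : θ₂ * (θ₁ * (θ₂ * (θ₁ * θ₂))) = θ₁ := by
    calc θ₂ * (θ₁ * (θ₂ * (θ₁ * θ₂)))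
        = (θ₁ * θ₁) * (θ₂ * (θ₁ * (θ₂ * (θ₁ * θ₂)))) := by rw [p1, one_mul]
      _ = θ₁ * (θ₁ * (θ₂ * (θ₁ * (θ₂ * (θ₁ * θ₂))))) := by rw [mul_assoc]
      _ = θ₁ * 1 := by rw [p3']
      _ = θ₁ := mul_one _
  have hne : θ₁ ≠ 1 := by
    intro hone
    rw [hθ₁, QuotientGroup.eq_one_iff] at hone
    have hdetE : (!![(1:K), 1; 0, 1]).det ≠ 0 := by
      simp [Matrix.det_fin_two_of]
    have hcomm := Subgroup.mem_center_iff.mp hone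
      (Matrix.GeneralLinearGroup.mkOfDetNeZero _ hdetE)
    have hval := congrArg Units.val hcomm
    simp only [Units.val_mul] at hval
    have hmat : (!![(1:K), 1; 0, 1] : Matrix (Fin 2) (Fin 2) K) * !![(-1 : K), 0; 0, 1]
        = !![(-1 : K), 0; 0, 1] * !![(1:K), 1; 0, 1] := hval
    have hent := congrFun (congrFun hmat 0) 1
    simp [Matrix.mul_apply, Fin.sum_univ_succ] at hent
    exact h2 (by linear_combination hent)
  exact main_aux θ₁ θ₂ p1 p2 p3 hne
end

section
/- Let K be a field of odd characteristic, a ∈ K with a^2 + 108 ≠ 0, and K(θ, ρ) the function field with ρ^2 = θ^7 - aθ^6 - 33θ^5 + 2aθ^4 - 33θ^3 - aθ^2 + θ. Then δ = θ + 1/θ and ν = -ρ/θ^2 are fixed by the involution γ₂ : (θ,ρ) ↦ (1/θ, ρ/θ^4) and satisfy ν^2 = δ^3 - aδ^2 - 36δ + 4a. -/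
open Polynomial
open scoped nonZeroDivisors

set_option maxHeartbeats 1600000 in
set_option synthInstance.maxHeartbeats 400000 in
/-- In the function field `K(θ,ρ)` with
`ρ² = θ⁷ - aθ⁶ - 33θ⁵ + 2aθ⁴ - 33θ³ - aθ² + θ` (realized as `AdjoinRoot p` over
`K(θ) = RatFunc K`), the elements `δ = θ + 1/θ` and `ν = -ρ/θ²` are fixed by the involution
`γ₂ : (θ,ρ) ↦ (1/θ, ρ/θ⁴)` and satisfy `ν² = δ³ - aδ² - 36δ + 4a`. -/
theorem stmt_8 (K : Type*) [Field K] (h2 : (2 : K) ≠ 0) (a : K) (ha : a ^ 2 + 108 ≠ 0)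
    (p : Polynomial (RatFunc K))
    (hp : p = X ^ 2 - C ((RatFunc.X : RatFunc K) ^ 7 - RatFunc.C a * RatFunc.X ^ 6
      - 33 * RatFunc.X ^ 5 + 2 * RatFunc.C a * RatFunc.X ^ 4 - 33 * RatFunc.X ^ 3
      - RatFunc.C a * RatFunc.X ^ 2 + RatFunc.X))
    [Fact (Irreducible p)] :
    ∃ γ₂ : AdjoinRoot p ≃ₐ[K] AdjoinRoot p,
      let θ : AdjoinRoot p := AdjoinRoot.of p RatFunc.X
      let ρ : AdjoinRoot p := AdjoinRoot.root p
      let aF : AdjoinRoot p := algebraMap K (AdjoinRoot p) a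
      let δ : AdjoinRoot p := θ + 1 / θ
      let ν : AdjoinRoot p := -ρ / θ ^ 2
      γ₂ θ = 1 / θ ∧ γ₂ ρ = ρ / θ ^ 4 ∧ γ₂ * γ₂ = 1 ∧
      γ₂ δ = δ ∧ γ₂ ν = ν ∧
      ν ^ 2 = δ ^ 3 - aF * δ ^ 2 - 36 * δ + 4 * aF := by
  classical
  have hofmap : AdjoinRoot.of p = algebraMap (RatFunc K) (AdjoinRoot p) := rfl
  -- θ and basic facts
  have hθtr : Transcendental K (AdjoinRoot.of p RatFunc.X) := by
    have h1 : Transcendental K (RatFunc.X : RatFunc K) := by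
      rw [← RatFunc.algebraMap_X]
      exact (transcendental_algebraMap_iff (RatFunc.algebraMap_injective K)).2
        (Polynomial.transcendental_X K)
    rw [hofmap]
    exact (transcendental_algebraMap_iff
      (algebraMap (RatFunc K) (AdjoinRoot p)).injective).2 h1
  have hθ0 : (AdjoinRoot.of p RatFunc.X) ≠ 0 := by
    rw [hofmap, _root_.map_ne_zero]
    exact RatFunc.X_ne_zero
  have hθitr : Transcendental K (AdjoinRoot.of p RatFunc.X)⁻¹ := by
    intro halg
    exact hθtr (by simpa using halg.inv)
  -- the algebra map ψ : K[X] → L sending X to θ⁻¹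
  set ψ : K[X] →ₐ[K] AdjoinRoot p := Polynomial.aeval (AdjoinRoot.of p RatFunc.X)⁻¹ with hψdef
  have hψinj : Function.Injective ψ := transcendental_iff_injective.mp hθitr
  have hψ0 : K[X]⁰ ≤ (AdjoinRoot p)⁰.comap (ψ : K[X] →+* AdjoinRoot p) :=
    nonZeroDivisors_le_comap_nonZeroDivisors_of_injective _ hψinj
  set σ : RatFunc K →ₐ[K] AdjoinRoot p := RatFunc.liftAlgHom ψ hψ0 with hσdef
  have hσalg : ∀ P : K[X], σ (algebraMap K[X] (RatFunc K) P) = ψ P := by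
    intro P
    simpa using RatFunc.liftAlgHom_apply_div ψ hψ0 P 1
  have hσX : σ RatFunc.X = (AdjoinRoot.of p RatFunc.X)⁻¹ := by
    rw [← RatFunc.algebraMap_X, hσalg]
    simp [hψdef]
  have hσC : ∀ c : K, σ (RatFunc.C c) = algebraMap K (AdjoinRoot p) c := by
    intro c
    rw [← RatFunc.algebraMap_eq_C]
    exact σ.commutes c
  clear_value ψ σ
  -- generic evaluation of p
  have hev : ∀ {S : Type _} [CommRing S] (g : RatFunc K →+* S) (y : S), p.eval₂ g y =
      y ^ 2 - g (RatFunc.X ^ 7 - RatFunc.C a * RatFunc.X ^ 6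
        - 33 * RatFunc.X ^ 5 + 2 * RatFunc.C a * RatFunc.X ^ 4 - 33 * RatFunc.X ^ 3
        - RatFunc.C a * RatFunc.X ^ 2 + RatFunc.X) := by
    intro S _ g y
    rw [hp, eval₂_sub, eval₂_pow, eval₂_X, eval₂_C]
  have hC : (AdjoinRoot.of p) (RatFunc.C a) = algebraMap K (AdjoinRoot p) a := by
    rw [← RatFunc.algebraMap_eq_C, hofmap, ← IsScalarTower.algebraMap_apply]
  -- the quadratic relation
  have hρ2 : (AdjoinRoot.root p) ^ 2 =
      (AdjoinRoot.of p RatFunc.X) ^ 7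
        - algebraMap K (AdjoinRoot p) a * (AdjoinRoot.of p RatFunc.X) ^ 6
        - 33 * (AdjoinRoot.of p RatFunc.X) ^ 5
        + 2 * algebraMap K (AdjoinRoot p) a * (AdjoinRoot.of p RatFunc.X) ^ 4
        - 33 * (AdjoinRoot.of p RatFunc.X) ^ 3
        - algebraMap K (AdjoinRoot p) a * (AdjoinRoot.of p RatFunc.X) ^ 2
        + AdjoinRoot.of p RatFunc.X := by
    have h := AdjoinRoot.eval₂_root p
    rw [hev] at h
    simp only [map_sub, map_add, map_mul, map_pow, map_ofNat, hC] at h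
    linear_combination h
  -- the image of the root
  have heval : p.eval₂ (σ : RatFunc K →+* AdjoinRoot p)
      (AdjoinRoot.root p / (AdjoinRoot.of p RatFunc.X) ^ 4) = 0 := by
    rw [hev]
    simp only [map_sub, map_add, map_mul, map_pow, map_ofNat, AlgHom.coe_toRingHom, hσX, hσC]
    rw [sub_eq_zero, div_pow, div_eq_iff (pow_ne_zero 2 (pow_ne_zero 4 hθ0)), hρ2]
    have hu : (AdjoinRoot.of p RatFunc.X) * (AdjoinRoot.of p RatFunc.X)⁻¹ = 1 :=
      mul_inv_cancel₀ hθ0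
    linear_combination ((-1 : AdjoinRoot p) * (AdjoinRoot.of p RatFunc.X) ^ 1 + (AdjoinRoot.of p RatFunc.X) ^ 2 * (algebraMap K (AdjoinRoot p) a) ^ 1 + (-1 : AdjoinRoot p) * (AdjoinRoot.of p RatFunc.X) ^ 2 * (AdjoinRoot.of p RatFunc.X)⁻¹ ^ 1 + (33 : AdjoinRoot p) * (AdjoinRoot.of p RatFunc.X) ^ 3 + (AdjoinRoot.of p RatFunc.X) ^ 3 * (AdjoinRoot.of p RatFunc.X)⁻¹ ^ 1 * (algebraMap K (AdjoinRoot p) a) ^ 1 + (-1 : AdjoinRoot p) * (AdjoinRoot.of p RatFunc.X) ^ 3 * (AdjoinRoot.of p RatFunc.X)⁻¹ ^ 2 + (-2 : AdjoinRoot p) * (AdjoinRoot.of p RatFunc.X) ^ 4 * (algebraMap K (AdjoinRoot p) a) ^ 1 + (33 : AdjoinRoot p) * (AdjoinRoot.of p RatFunc.X) ^ 4 * (AdjoinRoot.of p RatFunc.X)⁻¹ ^ 1 + (AdjoinRoot.of p RatFunc.X) ^ 4 * (AdjoinRoot.of p RatFunc.X)⁻¹ ^ 2 * (algebraMap K (AdjoinRoot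 p) a) ^ 1 + (-1 : AdjoinRoot p) * (AdjoinRoot.of p RatFunc.X) ^ 4 * (AdjoinRoot.of p RatFunc.X)⁻¹ ^ 3 + (33 : AdjoinRoot p) * (AdjoinRoot.of p RatFunc.X) ^ 5 + (-2 : AdjoinRoot p) * (AdjoinRoot.of p RatFunc.X) ^ 5 * (AdjoinRoot.of p RatFunc.X)⁻¹ ^ 1 * (algebraMap K (AdjoinRoot p) a) ^ 1 + (33 : AdjoinRoot p) * (AdjoinRoot.of p RatFunc.X) ^ 5 * (AdjoinRoot.of p RatFunc.X)⁻¹ ^ 2 + (AdjoinRoot.of p RatFunc.X) ^ 5 * (AdjoinRoot.of p RatFunc.X)⁻¹ ^ 3 * (algebraMap K (AdjoinRoot p) a) ^ 1 + (-1 : AdjoinRoot p) * (AdjoinRoot.of p RatFunc.X) ^ 5 * (AdjoinRoot.of p RatFunc.X)⁻¹ ^ 4 + (AdjoinRoot.of p RatFunc.X) ^ 6 * (algebraMap K (AdjoinRoot p) a) ^ 1 + (33 : AdjoinRoot p) * (AdjoinRoot.of p RatFunc.X) ^ 6 * (AdjoinRoot.of p RatFunc.X)⁻¹ ^ 1 +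 (-2 : AdjoinRoot p) * (AdjoinRoot.of p RatFunc.X) ^ 6 * (AdjoinRoot.of p RatFunc.X)⁻¹ ^ 2 * (algebraMap K (AdjoinRoot p) a) ^ 1 + (33 : AdjoinRoot p) * (AdjoinRoot.of p RatFunc.X) ^ 6 * (AdjoinRoot.of p RatFunc.X)⁻¹ ^ 3 + (AdjoinRoot.of p RatFunc.X) ^ 6 * (AdjoinRoot.of p RatFunc.X)⁻¹ ^ 4 * (algebraMap K (AdjoinRoot p) a) ^ 1 + (-1 : AdjoinRoot p) * (AdjoinRoot.of p RatFunc.X) ^ 6 * (AdjoinRoot.of p RatFunc.X)⁻¹ ^ 5 + (-1 : AdjoinRoot p) * (AdjoinRoot.of p RatFunc.X) ^ 7 + (AdjoinRoot.of p RatFunc.X) ^ 7 * (AdjoinRoot.of p RatFunc.X)⁻¹ ^ 1 * (algebraMap K (AdjoinRoot p) a) ^ 1 + (33 : AdjoinRoot p) * (AdjoinRoot.of p RatFunc.X) ^ 7 * (AdjoinRoot.of p RatFunc.X)⁻¹ ^ 2 + (-2 : AdjoinRoot p) * (AdjoinRoot.of p RatFunc.X) ^ 7 * (AdjoinRoot.of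 p RatFunc.X)⁻¹ ^ 3 * (algebraMap K (AdjoinRoot p) a) ^ 1 + (33 : AdjoinRoot p) * (AdjoinRoot.of p RatFunc.X) ^ 7 * (AdjoinRoot.of p RatFunc.X)⁻¹ ^ 4 + (AdjoinRoot.of p RatFunc.X) ^ 7 * (AdjoinRoot.of p RatFunc.X)⁻¹ ^ 5 * (algebraMap K (AdjoinRoot p) a) ^ 1 + (-1 : AdjoinRoot p) * (AdjoinRoot.of p RatFunc.X) ^ 7 * (AdjoinRoot.of p RatFunc.X)⁻¹ ^ 6) * hu
  set φ0 : AdjoinRoot p →+* AdjoinRoot p :=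
    AdjoinRoot.lift (σ : RatFunc K →+* AdjoinRoot p)
      (AdjoinRoot.root p / (AdjoinRoot.of p RatFunc.X) ^ 4) heval with hφ0def
  have hφ0of : ∀ r : RatFunc K, φ0 (AdjoinRoot.of p r) = σ r := fun r => AdjoinRoot.lift_of heval
  have hφK : ∀ c : K, φ0 (algebraMap K (AdjoinRoot p) c) = algebraMap K (AdjoinRoot p) c := by
    intro c
    rw [IsScalarTower.algebraMap_apply K (RatFunc K) (AdjoinRoot p), ← hofmap, hφ0of]
    exact σ.commutes c
  set φ : AdjoinRoot p →ₐ[K] AdjoinRoot p := { φ0 with commutes' := hφK } with hφdef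
  have hφof : ∀ r : RatFunc K, φ (AdjoinRoot.of p r) = σ r := hφ0of
  have hφθ : φ (AdjoinRoot.of p RatFunc.X) = (AdjoinRoot.of p RatFunc.X)⁻¹ := by
    rw [hφof, hσX]
  have hφρ : φ (AdjoinRoot.root p) =
      AdjoinRoot.root p / (AdjoinRoot.of p RatFunc.X) ^ 4 := AdjoinRoot.lift_root heval
  clear_value φ
  -- extensionality: algebra maps agreeing on θ and ρ agree
  have haeval : ∀ P : K[X],
      (AdjoinRoot.of p) (algebraMap K[X] (RatFunc K) P) = aeval (AdjoinRoot.of p RatFunc.X) P := by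
    intro P
    rw [hofmap, ← RatFunc.algebraMap_X, aeval_algebraMap_apply, aeval_algebraMap_apply,
      Polynomial.aeval_X_left_apply]
  have hext : ∀ f g : AdjoinRoot p →ₐ[K] AdjoinRoot p,
      f (AdjoinRoot.of p RatFunc.X) = g (AdjoinRoot.of p RatFunc.X) →
      f (AdjoinRoot.root p) = g (AdjoinRoot.root p) → f = g := by
    intro f g hθfg hρfg
    have hof : ∀ r : RatFunc K, f (AdjoinRoot.of p r) = g (AdjoinRoot.of p r) := by
      intro r
      induction r using RatFunc.induction_on with
      | f P Q hQ =>
          have key : ∀ h : AdjoinRoot p →ₐ[K] AdjoinRoot p,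
              h (AdjoinRoot.of p (algebraMap K[X] (RatFunc K) P / algebraMap K[X] (RatFunc K) Q))
                = aeval (h (AdjoinRoot.of p RatFunc.X)) P
                  / aeval (h (AdjoinRoot.of p RatFunc.X)) Q := by
            intro h
            rw [map_div₀ (AdjoinRoot.of p), haeval P, haeval Q, map_div₀ h,
              ← Polynomial.aeval_algHom_apply h, ← Polynomial.aeval_algHom_apply h]
          rw [key f, key g, hθfg]
    apply AlgHom.ext
    intro x
    obtain ⟨q, rfl⟩ := AdjoinRoot.mk_surjective x
    rw [← AdjoinRoot.aeval_eq]
    induction q using Polynomial.induction_on with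
    | C r =>
        simpa only [Polynomial.aeval_C, ← hofmap] using hof r
    | add u v hu hv =>
        rw [map_add, map_add, map_add, hu, hv]
    | monomial n r ih =>
        have hmono : (C r * X ^ (n + 1) : (RatFunc K)[X]) = C r * X ^ n * X := by
          rw [pow_succ, mul_assoc]
        rw [hmono, map_mul (aeval (AdjoinRoot.root p)), map_mul f, map_mul g, ih,
          Polynomial.aeval_X, hρfg]
  have hinv : (AdjoinRoot.of p RatFunc.X)⁻¹ ≠ 0 := inv_ne_zero hθ0
  have hcomp : φ.comp φ = AlgHom.id K (AdjoinRoot p) := by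
    apply hext
    · rw [AlgHom.comp_apply, hφθ, map_inv₀, hφθ, inv_inv, AlgHom.id_apply]
    · rw [AlgHom.comp_apply, hφρ, map_div₀, hφρ, map_pow, hφθ, AlgHom.id_apply]
      field_simp
  set γ₂ : AdjoinRoot p ≃ₐ[K] AdjoinRoot p := AlgEquiv.ofAlgHom φ φ hcomp hcomp with hγdef
  have hγapp : ∀ x, γ₂ x = φ x := fun x => rfl
  have hγmul : ∀ x, (γ₂ * γ₂) x = γ₂ (γ₂ x) := fun x => rfl
  clear_value γ₂
  refine ⟨γ₂, ?_⟩
  intro θ ρ aF δ ν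
  have h1 : γ₂ θ = 1 / θ := by
    show γ₂ (AdjoinRoot.of p RatFunc.X) = 1 / AdjoinRoot.of p RatFunc.X
    rw [hγapp, hφθ, one_div]
  have h2' : γ₂ ρ = ρ / θ ^ 4 := by
    show γ₂ (AdjoinRoot.root p) = AdjoinRoot.root p / (AdjoinRoot.of p RatFunc.X) ^ 4
    rw [hγapp, hφρ]
  refine ⟨h1, h2', ?_, ?_, ?_, ?_⟩
  · apply AlgEquiv.ext
    intro x
    have : φ (φ x) = x := DFunLike.congr_fun hcomp x
    rw [hγmul, hγapp, hγapp, this, AlgEquiv.one_apply]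
  · show γ₂ (θ + 1 / θ) = θ + 1 / θ
    rw [map_add, h1, map_div₀, map_one, h1]
    have hθ0' : θ ≠ 0 := hθ0
    field_simp
    ring
  · show γ₂ (-ρ / θ ^ 2) = -ρ / θ ^ 2
    rw [map_div₀, map_neg, h2', map_pow, h1]
    have hθ0' : θ ≠ 0 := hθ0
    field_simp
  · show (-ρ / θ ^ 2) ^ 2 = (θ + 1 / θ) ^ 3 - aF * (θ + 1 / θ) ^ 2 - 36 * (θ + 1 / θ) + 4 * aF
    have hθ0' : θ ≠ 0 := hθ0
    have hρ2' : ρ ^ 2 = θ ^ 7 - aF * θ ^ 6 - 33 * θ ^ 5 + 2 * aF * θ ^ 4 - 33 * θ ^ 3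
        - aF * θ ^ 2 + θ := hρ2
    rw [div_pow, neg_sq, div_eq_iff (pow_ne_zero 2 (pow_ne_zero 2 hθ0')), hρ2']
    have hu : θ * θ⁻¹ = 1 := mul_inv_cancel₀ hθ0'
    linear_combination ((-1 : AdjoinRoot p) * θ ^ 1 + θ ^ 2 * aF ^ 1 + (-1 : AdjoinRoot p) * θ ^ 2 * θ⁻¹ ^ 1 + (33 : AdjoinRoot p) * θ ^ 3 + θ ^ 3 * θ⁻¹ ^ 1 * aF ^ 1 + (-1 : AdjoinRoot p) * θ ^ 3 * θ⁻¹ ^ 2 + (2 : AdjoinRoot p) * θ ^ 4 * aF ^ 1 + (-3 : AdjoinRoot p) * θ ^ 4 * θ⁻¹ ^ 1 + (-3 : AdjoinRoot p) * θ ^ 5) * hu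
end

section
/- Let K be a field of odd characteristic, a ∈ K with a^2 + 108 ≠ 0, and K(θ, ρ) the function field with ρ^2 = θ^7 - aθ^6 - 33θ^5 + 2aθ^4 - 33θ^3 - aθ^2 + θ. Then δ = θ + 1/θ and ε = (θ^2 ρ - ρ)/θ^3 are fixed by γ₃ : (θ, ρ) ↦ (1/θ, -ρ/θ^4) and satisfy ε^2 = δ^5 - aδ^4 - 40δ^3 + 8aδ^2 + 144δ - 16a = (δ^2 - 4)(δ^3 - aδ^2 - 36δ + 4a). -/
open Polynomial

set_option maxHeartbeats 1000000 in
set_option synthInstance.maxHeartbeats 200000 in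
/-- In the function field `K(θ,ρ)` with
`ρ² = θ⁷ - aθ⁶ - 33θ⁵ + 2aθ⁴ - 33θ³ - aθ² + θ`, the elements `δ = θ + 1/θ` and
`ε = (θ²ρ - ρ)/θ³` are fixed by `γ₃ : (θ,ρ) ↦ (1/θ, -ρ/θ⁴)` and satisfy
`ε² = δ⁵ - aδ⁴ - 40δ³ + 8aδ² + 144δ - 16a = (δ² - 4)(δ³ - aδ² - 36δ + 4a)`. -/
theorem stmt_9 (K : Type*) [Field K] (h2 : (2 : K) ≠ 0) (a : K) (ha : a ^ 2 + 108 ≠ 0)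
    (p : Polynomial (RatFunc K))
    (hp : p = X ^ 2 - C ((RatFunc.X : RatFunc K) ^ 7 - RatFunc.C a * RatFunc.X ^ 6
      - 33 * RatFunc.X ^ 5 + 2 * RatFunc.C a * RatFunc.X ^ 4 - 33 * RatFunc.X ^ 3
      - RatFunc.C a * RatFunc.X ^ 2 + RatFunc.X))
    [Fact (Irreducible p)] :
    ∃ γ₃ : AdjoinRoot p ≃ₐ[K] AdjoinRoot p,
      let θ : AdjoinRoot p := AdjoinRoot.of p RatFunc.X
      let ρ : AdjoinRoot p := AdjoinRoot.root p
      let aF : AdjoinRoot p := algebraMap K (AdjoinRoot p) a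
      let δ : AdjoinRoot p := θ + 1 / θ
      let ε : AdjoinRoot p := (θ ^ 2 * ρ - ρ) / θ ^ 3
      γ₃ θ = 1 / θ ∧ γ₃ ρ = -ρ / θ ^ 4 ∧ γ₃ * γ₃ = 1 ∧
      γ₃ δ = δ ∧ γ₃ ε = ε ∧
      ε ^ 2 = δ ^ 5 - aF * δ ^ 4 - 40 * δ ^ 3 + 8 * aF * δ ^ 2 + 144 * δ - 16 * aF ∧
      ε ^ 2 = (δ ^ 2 - 4) * (δ ^ 3 - aF * δ ^ 2 - 36 * δ + 4 * aF) := by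
  classical
  set θ : AdjoinRoot p := AdjoinRoot.of p RatFunc.X with hθdef
  set ρ : AdjoinRoot p := AdjoinRoot.root p with hρdef
  set aF : AdjoinRoot p := algebraMap K (AdjoinRoot p) a with haFdef
  have hofinj : Function.Injective (AdjoinRoot.of p) := by
    have h := (algebraMap (RatFunc K) (AdjoinRoot p)).injective
    simpa [AdjoinRoot.algebraMap_eq] using h
  have hθ0 : θ ≠ 0 := fun h =>
    RatFunc.X_ne_zero (hofinj (h.trans (map_zero _).symm))
  have hθi0 : θ⁻¹ ≠ 0 := inv_ne_zero hθ0
  -- transcendence of θ⁻¹ over K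
  have htX : Transcendental K (RatFunc.X : RatFunc K) := by
    have h1 : Function.Injective (algebraMap K[X] (RatFunc K)) := IsFractionRing.injective _ _
    have h := (transcendental_algebraMap_iff (R := K) (A := RatFunc K) h1).2
      (Polynomial.transcendental_X K)
    rwa [RatFunc.algebraMap_X] at h
  have htθ : Transcendental K θ := by
    have h := (transcendental_algebraMap_iff (R := K) (S := RatFunc K) (A := AdjoinRoot p)
      (algebraMap (RatFunc K) (AdjoinRoot p)).injective).2 htX
    simpa [AdjoinRoot.algebraMap_eq] using h
  have htinv : Transcendental K θ⁻¹ := fun h => htθ (IsAlgebraic.inv_iff.mp h)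
  -- the lifted algebra hom RatFunc K →ₐ[K] AdjoinRoot p sending X to θ⁻¹
  have hφinj : Function.Injective (Polynomial.aeval θ⁻¹ : K[X] →ₐ[K] AdjoinRoot p) :=
    transcendental_iff_injective.mp htinv
  have hφ : nonZeroDivisors K[X] ≤ (nonZeroDivisors (AdjoinRoot p)).comap (Polynomial.aeval θ⁻¹ : K[X] →ₐ[K] AdjoinRoot p) := by
    intro q hq
    simp only [Submonoid.mem_comap]
    rw [mem_nonZeroDivisors_iff_ne_zero] at hq ⊢
    intro h0
    exact hq (hφinj (by simpa using h0))
  set f : RatFunc K →ₐ[K] AdjoinRoot p := RatFunc.liftAlgHom (Polynomial.aeval θ⁻¹) hφ with hfdef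
  have hfX : f RatFunc.X = θ⁻¹ := by
    rw [hfdef, RatFunc.liftAlgHom_apply, RatFunc.num_X, RatFunc.denom_X, map_one, div_one,
      Polynomial.aeval_X]
  have hfC : ∀ k : K, f (RatFunc.C k) = algebraMap K (AdjoinRoot p) k := by
    intro k
    rw [← RatFunc.algebraMap_eq_C]
    exact f.commutes k
  -- key relation
  have halg : ∀ k : K, algebraMap K (AdjoinRoot p) k
      = AdjoinRoot.of p (RatFunc.C k) := by
    intro k
    rw [AdjoinRoot.algebraMap_eq' K, RingHom.comp_apply, RatFunc.algebraMap_eq_C]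
  have haF : AdjoinRoot.of p (RatFunc.C a) = aF := (halg a).symm
  have hρ2 : ρ ^ 2 = θ ^ 7 - aF * θ ^ 6 - 33 * θ ^ 5 + 2 * aF * θ ^ 4 - 33 * θ ^ 3
      - aF * θ ^ 2 + θ := by
    have h0 := AdjoinRoot.eval₂_root p
    rw [congrArg (eval₂ (AdjoinRoot.of p) (AdjoinRoot.root p)) hp] at h0
    simp only [eval₂_sub, eval₂_pow, eval₂_X, eval₂_C, sub_eq_zero] at h0
    rw [hρdef, h0]
    simp only [map_sub, map_add, map_mul, map_pow, map_ofNat, haF, ← hθdef]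
  have hfr : f (RatFunc.X ^ 7 - RatFunc.C a * RatFunc.X ^ 6 - 33 * RatFunc.X ^ 5
      + 2 * RatFunc.C a * RatFunc.X ^ 4 - 33 * RatFunc.X ^ 3 - RatFunc.C a * RatFunc.X ^ 2
      + RatFunc.X) = θ⁻¹ ^ 7 - aF * θ⁻¹ ^ 6 - 33 * θ⁻¹ ^ 5 + 2 * aF * θ⁻¹ ^ 4
      - 33 * θ⁻¹ ^ 3 - aF * θ⁻¹ ^ 2 + θ⁻¹ := by
    simp only [map_sub, map_add, map_mul, map_pow, map_ofNat, hfX, hfC a, ← haFdef]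
  have heval : Polynomial.eval₂ (f : RatFunc K →+* AdjoinRoot p) (-ρ / θ ^ 4) p = 0 := by
    rw [congrArg (eval₂ (f : RatFunc K →+* AdjoinRoot p) (-ρ / θ ^ 4)) hp]
    rw [eval₂_sub, eval₂_pow, eval₂_X, eval₂_C]
    simp only [AlgHom.coe_toRingHom]
    rw [hfr, sub_eq_zero]
    have h1 : (-ρ / θ ^ 4) ^ 2 = ρ ^ 2 / θ ^ 8 := by ring
    rw [h1, hρ2]
    linear_combination (θ⁻¹ + (-33) * θ⁻¹^3 + (-33) * θ⁻¹^5 + θ⁻¹^7 + θ * θ⁻¹^2 + (-33) * θ * θ⁻¹^4 + (-33) * θ * θ⁻¹^6 + θ^2 * θ⁻¹^3 + (-33) * θ^2 * θ⁻¹^5 + (-33) * θ^2 * θ⁻¹^7 + θ^3 * θ⁻¹^4 + (-33) * θ^3 * θ⁻¹^6 + θ^4 * θ⁻¹^5 + (-33) * θ^4 * θ⁻¹^7 + θ^5 * θ⁻¹^6 + θ^6 * θ⁻¹^7 + (-1) * aF * θ⁻¹^2 + (2) * aF * θ⁻¹^4 + (-1) * aF * θ⁻¹^6 + (-1) * aF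 * θ * θ⁻¹^3 + (2) * aF * θ * θ⁻¹^5 + (-1) * aF * θ * θ⁻¹^7 + (-1) * aF * θ^2 * θ⁻¹^4 + (2) * aF * θ^2 * θ⁻¹^6 + (-1) * aF * θ^3 * θ⁻¹^5 + (2) * aF * θ^3 * θ⁻¹^7 + (-1) * aF * θ^4 * θ⁻¹^6 + (-1) * aF * θ^5 * θ⁻¹^7) * (mul_inv_cancel₀ hθ0)
  -- the hom γ
  set γ0 : AdjoinRoot p →+* AdjoinRoot p :=
    AdjoinRoot.lift (f : RatFunc K →+* AdjoinRoot p) (-ρ / θ ^ 4) heval with hγ0def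
  have hγ0of : ∀ x : RatFunc K, γ0 (AdjoinRoot.of p x) = f x := fun x =>
    AdjoinRoot.lift_of heval
  have hγ0root : γ0 ρ = -ρ / θ ^ 4 := AdjoinRoot.lift_root heval
  have hγ0θ : γ0 θ = θ⁻¹ := by rw [hθdef, hγ0of, hfX]
  have hγ0ρ : γ0 ρ = -ρ / θ ^ 4 := hγ0root
  set γ : AdjoinRoot p →ₐ[K] AdjoinRoot p :=
    { toRingHom := γ0,
      commutes' := fun k => by
        show γ0 (algebraMap K (AdjoinRoot p) k) = algebraMap K (AdjoinRoot p) k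
        rw [halg k, hγ0of, hfC k, halg k] } with hγdef
  have hγap : ∀ x, γ x = γ0 x := fun x => rfl
  have hγθ : γ θ = θ⁻¹ := hγ0θ
  have hγρ : γ ρ = -ρ / θ ^ 4 := hγ0root
  have hγγ_of : (γ0.comp γ0).comp (AdjoinRoot.of p) = (AdjoinRoot.of p) := by
    apply IsLocalization.ringHom_ext (nonZeroDivisors K[X])
    apply Polynomial.ringHom_ext
    · intro k
      show γ0 (γ0 ((AdjoinRoot.of p) (RatFunc.C k))) = (AdjoinRoot.of p) (RatFunc.C k)
      rw [hγ0of, hfC k, halg k, hγ0of, hfC k, halg k]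
    · show γ0 (γ0 ((AdjoinRoot.of p) RatFunc.X)) = (AdjoinRoot.of p) RatFunc.X
      rw [← hθdef, hγ0θ, map_inv₀, hγ0θ, inv_inv]
  have hγγ : ∀ x, γ0 (γ0 x) = x := by
    have hΨ : ∀ x : RatFunc K, (γ0.comp γ0) (algebraMap (RatFunc K)
        (AdjoinRoot p) x) = algebraMap (RatFunc K) (AdjoinRoot p) x := fun x =>
      DFunLike.congr_fun hγγ_of x
    set Ψ : AdjoinRoot p →ₐ[RatFunc K] AdjoinRoot p :=
      { toRingHom := γ0.comp γ0, commutes' := hΨ } with hΨdef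
    have h : Ψ = AlgHom.id (RatFunc K) (AdjoinRoot p) := by
      apply AdjoinRoot.algHom_ext
      show γ0 (γ0 (AdjoinRoot.root p)) = AdjoinRoot.root p
      rw [← hρdef, hγ0ρ, map_div₀, map_neg, map_pow, hγ0ρ, hγ0θ]
      field_simp
    intro x
    have := DFunLike.congr_fun h x
    exact this
  refine ⟨AlgEquiv.ofAlgHom γ γ (AlgHom.ext fun x => hγγ x) (AlgHom.ext fun x => hγγ x),
    ?_, ?_, ?_, ?_, ?_, ?_, ?_⟩
  · show γ θ = 1 / θ
    rw [hγθ, one_div]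
  · exact hγρ
  · apply AlgEquiv.ext
    intro x
    show γ (γ x) = x
    exact hγγ x
  · show γ (θ + 1 / θ) = θ + 1 / θ
    rw [map_add, map_div₀, map_one, hγθ]
    rw [one_div, one_div, inv_inv]
    ring
  · show γ ((θ ^ 2 * ρ - ρ) / θ ^ 3) = (θ ^ 2 * ρ - ρ) / θ ^ 3
    simp only [map_div₀, map_sub, map_mul, map_pow, hγθ, hγρ]
    rw [div_eq_div_iff (by simp [hθ0]) (pow_ne_zero _ hθ0)]
    field_simp [hθ0]
    ring
  · show ((θ ^ 2 * ρ - ρ) / θ ^ 3) ^ 2 = (θ + 1/θ) ^ 5 - aF * (θ + 1/θ) ^ 4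
      - 40 * (θ + 1/θ) ^ 3 + 8 * aF * (θ + 1/θ) ^ 2 + 144 * (θ + 1/θ) - 16 * aF
    have h1 : ((θ ^ 2 * ρ - ρ) / θ ^ 3) ^ 2 = (θ ^ 2 - 1) ^ 2 * ρ ^ 2 / θ ^ 6 := by ring
    rw [h1, hρ2]
    linear_combination ((144) * θ⁻¹ + (-40) * θ⁻¹^3 + θ⁻¹^5 + (144) * θ + (24) * θ * θ⁻¹^2 + (-35) * θ * θ⁻¹^4 + (24) * θ^2 * θ⁻¹ + (34) * θ^2 * θ⁻¹^3 + (-35) * θ^2 * θ⁻¹^5 + (-40) * θ^3 + (34) * θ^3 * θ⁻¹^2 + (34) * θ^3 * θ⁻¹^4 + (-35) * θ^4 * θ⁻¹ + (34) * θ^4 * θ⁻¹^3 + (34) * θ^4 * θ⁻¹^5 + θ^5 + (-35) * θ^5 * θ⁻¹^2 + (34) * θ^5 * θ⁻¹^4 + θ^6 * θ⁻¹ + (-35) * θ^6 * θ⁻¹^3 + (34) * θ^6 * θ⁻¹^5 + θ^7 * θ⁻¹^2 + (-35) * θ^7 * θ⁻¹^4 + θ^8 * θ⁻¹^3 + (-35)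 * θ^8 * θ⁻¹^5 + θ^9 * θ⁻¹^4 + θ^10 * θ⁻¹^5 + (-16) * aF + (8) * aF * θ⁻¹^2 + (-1) * aF * θ⁻¹^4 + (4) * aF * θ * θ⁻¹^3 + (-1) * aF * θ * θ⁻¹^5 + (8) * aF * θ^2 + (-6) * aF * θ^2 * θ⁻¹^2 + (4) * aF * θ^2 * θ⁻¹^4 + (4) * aF * θ^3 * θ⁻¹ + (-6) * aF * θ^3 * θ⁻¹^3 + (4) * aF * θ^3 * θ⁻¹^5 + (-1) * aF * θ^4 + (4) * aF * θ^4 * θ⁻¹^2 + (-6) * aF * θ^4 * θ⁻¹^4 + (-1) * aF * θ^5 * θ⁻¹ + (4) * aF * θ^5 * θ⁻¹^3 + (-6) * aF * θ^5 * θ⁻¹^5 + (-1) * aF * θ^6 * θ⁻¹^2 + (4) * aF * θ^6 * θ⁻¹^4 + (-1) * aF * θ^7 * θ⁻¹^3 + (4) * aF * θ^7 * θ⁻¹^5 + (-1) * aF * θ^8 * θ⁻¹^4 + (-1) * aF * θ^9 * θ⁻¹^5) * (mul_inv_cancel₀ hθ0)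
  · show ((θ ^ 2 * ρ - ρ) / θ ^ 3) ^ 2 = ((θ + 1/θ) ^ 2 - 4) * ((θ + 1/θ) ^ 3
      - aF * (θ + 1/θ) ^ 2 - 36 * (θ + 1/θ) + 4 * aF)
    have h1 : ((θ ^ 2 * ρ - ρ) / θ ^ 3) ^ 2 = (θ ^ 2 - 1) ^ 2 * ρ ^ 2 / θ ^ 6 := by ring
    rw [h1, hρ2]
    linear_combination ((144) * θ⁻¹ + (-40) * θ⁻¹^3 + θ⁻¹^5 + (144) * θ + (24) * θ * θ⁻¹^2 + (-35) * θ * θ⁻¹^4 + (24) * θ^2 * θ⁻¹ + (34) * θ^2 * θ⁻¹^3 + (-35) * θ^2 * θ⁻¹^5 + (-40) * θ^3 + (34) * θ^3 * θ⁻¹^2 + (34) * θ^3 * θ⁻¹^4 + (-35) * θ^4 * θ⁻¹ + (34) * θ^4 * θ⁻¹^3 + (34) * θ^4 * θ⁻¹^5 + θ^5 + (-35) * θ^5 * θ⁻¹^2 + (34) * θ^5 * θ⁻¹^4 + θ^6 * θ⁻¹ + (-35) * θ^6 * θ⁻¹^3 + (34) * θ^6 * θ⁻¹^5 + θ^7 *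 θ⁻¹^2 + (-35) * θ^7 * θ⁻¹^4 + θ^8 * θ⁻¹^3 + (-35) * θ^8 * θ⁻¹^5 + θ^9 * θ⁻¹^4 + θ^10 * θ⁻¹^5 + (-16) * aF + (8) * aF * θ⁻¹^2 + (-1) * aF * θ⁻¹^4 + (4) * aF * θ * θ⁻¹^3 + (-1) * aF * θ * θ⁻¹^5 + (8) * aF * θ^2 + (-6) * aF * θ^2 * θ⁻¹^2 + (4) * aF * θ^2 * θ⁻¹^4 + (4) * aF * θ^3 * θ⁻¹ + (-6) * aF * θ^3 * θ⁻¹^3 + (4) * aF * θ^3 * θ⁻¹^5 + (-1) * aF * θ^4 + (4) * aF * θ^4 * θ⁻¹^2 + (-6) * aF * θ^4 * θ⁻¹^4 + (-1) * aF * θ^5 * θ⁻¹ + (4) * aF * θ^5 * θ⁻¹^3 + (-6) * aF * θ^5 * θ⁻¹^5 + (-1) * aF * θ^6 * θ⁻¹^2 + (4) * aF * θ^6 * θ⁻¹^4 + (-1) * aF * θ^7 * θ⁻¹^3 + (4) * aF * θ^7 * θ⁻¹^5 + (-1) * aF * θ^8 * θ⁻¹^4 + (-1) * aF * θ^9 *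 θ⁻¹^5) * (mul_inv_cancel₀ hθ0)
end

section
/- Over a field K of odd characteristic containing ξ with ξ^2 = -1, the map φ(X,Y) = (-X - 1, ξY) defines an isomorphism between the elliptic curves Y^2 = X^3 + ((a+6)/4)X^2 + ((a-6)/4)X - 1 and Y^2 = X^3 + ((-a+6)/4)X^2 + ((-a-6)/4)X - 1. -/
/-- Over a field `K` of odd characteristic containing `ξ` with `ξ² = -1`,
the map `φ(X,Y) = (-X-1, ξY)` is a bijection between the point sets of the elliptic curves
`Y² = X³ + ((a+6)/4)X² + ((a-6)/4)X - 1` and `Y² = X³ + ((-a+6)/4)X² + ((-a-6)/4)X - 1`. -/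
theorem stmt_13 (K : Type*) [Field K] (h2 : (2 : K) ≠ 0) (ξ : K) (hξ : ξ ^ 2 = -1)
    (a : K) (ha : a ^ 2 + 108 ≠ 0) :
    ∃ e : {P : K × K // P.2 ^ 2 = P.1 ^ 3 + (a + 6) / 4 * P.1 ^ 2 + (a - 6) / 4 * P.1 - 1} ≃
        {P : K × K // P.2 ^ 2 = P.1 ^ 3 + (-a + 6) / 4 * P.1 ^ 2 + (-a - 6) / 4 * P.1 - 1},
      ∀ P, (e P : K × K) = (-(P : K × K).1 - 1, ξ * (P : K × K).2) := by
  have h4 : (4 : K) ≠ 0 := by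
    have : (4 : K) = 2 * 2 := by norm_num
    rw [this]; exact mul_ne_zero h2 h2
  refine ⟨⟨fun P => ⟨(-(P : K × K).1 - 1, ξ * (P : K × K).2), ?_⟩,
      fun P => ⟨(-(P : K × K).1 - 1, -ξ * (P : K × K).2), ?_⟩, ?_, ?_⟩, fun P => rfl⟩
  · obtain ⟨⟨x, y⟩, hP⟩ := P
    simp only at hP ⊢
    have : (ξ * y) ^ 2 = -(y ^ 2) := by rw [mul_pow, hξ]; ring
    rw [this, hP]; field_simp; ring
  · obtain ⟨⟨x, y⟩, hP⟩ := P
    simp only at hP ⊢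
    have : (-ξ * y) ^ 2 = -(y ^ 2) := by rw [mul_pow, neg_pow, hξ]; ring
    rw [this, hP]; field_simp; ring
  · rintro ⟨⟨x, y⟩, hP⟩
    ext <;> simp <;> linear_combination -y * hξ
  · rintro ⟨⟨x, y⟩, hP⟩
    ext <;> simp <;> linear_combination -y * hξ
end

section
/- Over the rationals, the map θ(x, y) = ((x^3/4 - x/9)/(x + 2/9)^2, (x^3 y/8 + x^2 y/12 + x y/18 - y/81)/(x + 2/9)^3) sends points of the elliptic curve y^2 = x^3 + (11/12)x^2 + (1/9)x + 1/81 to points of the elliptic curve Y^2 = X^3 + (9/16)X^2 + (3/16)X + 1/64. -/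
/-- Over `ℚ`, the map
`θ(x,y) = ((x³/4 - x/9)/(x + 2/9)², (x³y/8 + x²y/12 + xy/18 - y/81)/(x + 2/9)³)`
sends affine points of `y² = x³ + (11/12)x² + (1/9)x + 1/81` (with `x ≠ -2/9`) to points of
`Y² = X³ + (9/16)X² + (3/16)X + 1/64`. -/
theorem stmt_15 (x y : ℚ) (hx : x ≠ -2 / 9)
    (h : y ^ 2 = x ^ 3 + 11 / 12 * x ^ 2 + 1 / 9 * x + 1 / 81) :
    ((x ^ 3 * y / 8 + x ^ 2 * y / 12 + x * y / 18 - y / 81) / (x + 2 / 9) ^ 3) ^ 2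
      = ((x ^ 3 / 4 - x / 9) / (x + 2 / 9) ^ 2) ^ 3
        + 9 / 16 * ((x ^ 3 / 4 - x / 9) / (x + 2 / 9) ^ 2) ^ 2
        + 3 / 16 * ((x ^ 3 / 4 - x / 9) / (x + 2 / 9) ^ 2) + 1 / 64 := by
  have hne : x * 9 + 2 ≠ 0 := fun hc => hx (by linarith)
  have hne2 : x + 2 / 9 ≠ 0 := fun hc => hx (by linarith)
  field_simp
  linear_combination (x * (x * (x * 12 + 8) * 18 + 8 * 12) * 81 - 8 * 12 * 18) ^ 2 * 9 ^ 6 * 4 ^ 3 * 16 * 64 * h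
end

section
/- Let K be an algebraically closed field of odd characteristic and let K(u,v) be the genus-2 hyperelliptic function field with v^2 = 4u^6 - 12u^5 + 21u^4 - 22u^3 + 21u^2 - 12u + 4. The maps ψ₁(u,v) = (u,-v) and ψ₂(u,v) = (-u+1, v) are commuting involutory automorphisms; the elements u₁ = -u^2 + u and v₁ = v are fixed by ψ₂ and satisfy v₁^2 = -4u₁^3 + 9u₁^2 - 12u₁ + 4, while u₂ = u₁ and v₂ = v(2u-1) are fixed by ψ₁ψ₂ and satisfy v₂^2 = (-4u₂^3 + 9u₂^2 - 12u₂ + 4)(-4u₂ + 1). -/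
open Polynomial

/-- Two ring homs out of `AdjoinRoot f` agreeing on `of f` and on the root are equal. -/
lemma adjoinRoot_ringHom_ext {R S : Type*} [CommRing R] [Semiring S] (f : R[X])
    {g₁ g₂ : AdjoinRoot f →+* S}
    (hC : g₁.comp (AdjoinRoot.of f) = g₂.comp (AdjoinRoot.of f))
    (hX : g₁ (AdjoinRoot.root f) = g₂ (AdjoinRoot.root f)) : g₁ = g₂ := by
  have hmk : g₁.comp (AdjoinRoot.mk f) = g₂.comp (AdjoinRoot.mk f) :=
    Polynomial.ringHom_ext' hC hX
  refine RingHom.ext fun x => ?_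
  obtain ⟨q, rfl⟩ := AdjoinRoot.mk_surjective x
  exact RingHom.congr_fun hmk q

set_option maxHeartbeats 1000000 in
set_option synthInstance.maxHeartbeats 200000 in
set_option maxRecDepth 8000 in
/-- In the genus-2 hyperelliptic function field `K(u,v)` with
`v² = 4u⁶ - 12u⁵ + 21u⁴ - 22u³ + 21u² - 12u + 4` (realized as `AdjoinRoot p` over
`K(u) = RatFunc K`), the maps `ψ₁(u,v) = (u,-v)` and `ψ₂(u,v) = (-u+1, v)` are commuting
involutory automorphisms; `u₁ = -u² + u` and `v₁ = v` are fixed by `ψ₂` and satisfy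
`v₁² = -4u₁³ + 9u₁² - 12u₁ + 4`, while `u₂ = u₁` and `v₂ = v(2u-1)` are fixed by `ψ₁ψ₂`
and satisfy `v₂² = (-4u₂³ + 9u₂² - 12u₂ + 4)(-4u₂ + 1)`. -/
theorem stmt_16 (K : Type*) [Field K] [IsAlgClosed K] (h2 : (2 : K) ≠ 0)
    (p : Polynomial (RatFunc K))
    (hp : p = X ^ 2 - C (4 * (RatFunc.X : RatFunc K) ^ 6 - 12 * RatFunc.X ^ 5
      + 21 * RatFunc.X ^ 4 - 22 * RatFunc.X ^ 3 + 21 * RatFunc.X ^ 2 - 12 * RatFunc.X + 4))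
    [Fact (Irreducible p)] :
    ∃ ψ₁ ψ₂ : AdjoinRoot p ≃ₐ[K] AdjoinRoot p,
      let u : AdjoinRoot p := AdjoinRoot.of p RatFunc.X
      let v : AdjoinRoot p := AdjoinRoot.root p
      let u₁ : AdjoinRoot p := -u ^ 2 + u
      let v₂ : AdjoinRoot p := v * (2 * u - 1)
      ψ₁ u = u ∧ ψ₁ v = -v ∧ ψ₂ u = -u + 1 ∧ ψ₂ v = v ∧
      ψ₁ * ψ₂ = ψ₂ * ψ₁ ∧ orderOf ψ₁ = 2 ∧ orderOf ψ₂ = 2 ∧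
      ψ₂ u₁ = u₁ ∧ ψ₂ v = v ∧
      v ^ 2 = -4 * u₁ ^ 3 + 9 * u₁ ^ 2 - 12 * u₁ + 4 ∧
      (ψ₁ * ψ₂) u₁ = u₁ ∧ (ψ₁ * ψ₂) v₂ = v₂ ∧
      v₂ ^ 2 = (-4 * u₁ ^ 3 + 9 * u₁ ^ 2 - 12 * u₁ + 4) * (-4 * u₁ + 1) := by
  classical
  subst hp
  set f : RatFunc K := 4 * (RatFunc.X : RatFunc K) ^ 6 - 12 * RatFunc.X ^ 5
      + 21 * RatFunc.X ^ 4 - 22 * RatFunc.X ^ 3 + 21 * RatFunc.X ^ 2 - 12 * RatFunc.X + 4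
    with hf
  set p : (RatFunc K)[X] := X ^ 2 - C f with hp
  set u : AdjoinRoot p := AdjoinRoot.of p RatFunc.X with hu
  set v : AdjoinRoot p := AdjoinRoot.root p with hv
  -- basic relation
  have hroot : v ^ 2 = AdjoinRoot.of p f := by
    have h0 := AdjoinRoot.eval₂_root p
    simp only [hp, eval₂_sub, eval₂_pow, eval₂_X, eval₂_C, sub_eq_zero] at h0
    exact h0
  have hv2 : v ^ 2 = 4 * u ^ 6 - 12 * u ^ 5 + 21 * u ^ 4 - 22 * u ^ 3
      + 21 * u ^ 2 - 12 * u + 4 := by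
    rw [hroot, hf]
    simp only [map_add, map_sub, map_mul, map_pow, map_ofNat, hu]
  -- the substitution X ↦ 1 - X on K[X] and K(X)
  have hcc : (1 - X : K[X]).comp (1 - X) = X := by
    simp [sub_comp]
  set e : K[X] ≃ₐ[K] K[X] := Polynomial.algEquivOfCompEqX (1 - X) (1 - X) hcc hcc with he
  set σ : RatFunc K ≃ₐ[K] RatFunc K :=
    IsFractionRing.algEquivOfAlgEquiv (K := RatFunc K) (L := RatFunc K) e with hσ
  have hσa : ∀ q : K[X], σ (algebraMap K[X] (RatFunc K) q)
      = algebraMap K[X] (RatFunc K) (e q) := fun q =>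
    IsFractionRing.algEquivOfAlgEquiv_algebraMap e q
  have hσX : σ (RatFunc.X : RatFunc K) = 1 - RatFunc.X := by
    rw [← RatFunc.algebraMap_X, hσa]
    simp [he, map_sub]
  have hσσ : ∀ x : RatFunc K, σ (σ x) = x := fun x => σ.symm_apply_apply x
  have hσf : σ f = f := by
    rw [hf]
    simp only [map_add, map_sub, map_mul, map_pow, map_ofNat, hσX]
    ring
  -- the two lifted ring homomorphisms
  have hpz1 : p.eval₂ (AdjoinRoot.of p) (-v) = 0 := by
    show eval₂ (AdjoinRoot.of p) (-v) (X ^ 2 - C f) = 0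
    simp only [eval₂_sub, eval₂_pow, eval₂_X, eval₂_C, sub_eq_zero]
    have hns : (-v) ^ 2 = v ^ 2 := by ring
    rw [hns, hroot]
  have hpz2 : p.eval₂ ((AdjoinRoot.of p).comp (σ : RatFunc K →+* RatFunc K)) v = 0 := by
    show eval₂ ((AdjoinRoot.of p).comp (σ : RatFunc K →+* RatFunc K)) v (X ^ 2 - C f) = 0
    simp only [eval₂_sub, eval₂_pow, eval₂_X, eval₂_C, RingHom.comp_apply, sub_eq_zero]
    show v ^ 2 = AdjoinRoot.of p (σ f)
    rw [hσf, hroot]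
  set L₁ : AdjoinRoot p →+* AdjoinRoot p := AdjoinRoot.lift (AdjoinRoot.of p) (-v) hpz1
    with hL₁
  set L₂ : AdjoinRoot p →+* AdjoinRoot p :=
    AdjoinRoot.lift ((AdjoinRoot.of p).comp (σ : RatFunc K →+* RatFunc K)) v hpz2 with hL₂
  have hL₁of : ∀ x : RatFunc K, L₁ (AdjoinRoot.of p x) = AdjoinRoot.of p x := fun x =>
    AdjoinRoot.lift_of hpz1
  have hL₁v : L₁ v = -v := AdjoinRoot.lift_root hpz1
  have hL₂of : ∀ x : RatFunc K, L₂ (AdjoinRoot.of p x) = AdjoinRoot.of p (σ x) := fun x =>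
    AdjoinRoot.lift_of hpz2
  have hL₂v : L₂ v = v := AdjoinRoot.lift_root hpz2
  -- involutivity and commutation at the ring hom level
  have hL₁L₁ : L₁.comp L₁ = RingHom.id _ := by
    refine adjoinRoot_ringHom_ext p (RingHom.ext fun x => ?_) ?_
    · simp only [RingHom.comp_apply, hL₁of, RingHom.id_apply]
    · show L₁ (L₁ v) = v
      rw [hL₁v, map_neg, hL₁v, neg_neg]
  have hL₂L₂ : L₂.comp L₂ = RingHom.id _ := by
    refine adjoinRoot_ringHom_ext p (RingHom.ext fun x => ?_) ?_
    · simp only [RingHom.comp_apply, hL₂of, hσσ, RingHom.id_apply]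
    · show L₂ (L₂ v) = v
      rw [hL₂v, hL₂v]
  have hL₁L₂ : L₁.comp L₂ = L₂.comp L₁ := by
    refine adjoinRoot_ringHom_ext p (RingHom.ext fun x => ?_) ?_
    · simp only [RingHom.comp_apply, hL₁of, hL₂of]
    · show L₁ (L₂ v) = L₂ (L₁ v)
      rw [hL₂v, hL₁v, map_neg, hL₂v]
  -- algebra equivalences
  have hcomm₁ : ∀ r : K, L₁ (algebraMap K (AdjoinRoot p) r) = algebraMap K (AdjoinRoot p) r := by
    intro r
    rw [AdjoinRoot.algebraMap_eq' K, RingHom.comp_apply]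
    exact hL₁of _
  have hcomm₂ : ∀ r : K, L₂ (algebraMap K (AdjoinRoot p) r) = algebraMap K (AdjoinRoot p) r := by
    intro r
    rw [AdjoinRoot.algebraMap_eq' K, RingHom.comp_apply, hL₂of, σ.commutes]
  set Ψ₁ : AdjoinRoot p →ₐ[K] AdjoinRoot p := { L₁ with commutes' := hcomm₁ } with hΨ₁
  set Ψ₂ : AdjoinRoot p →ₐ[K] AdjoinRoot p := { L₂ with commutes' := hcomm₂ } with hΨ₂
  set ψ₁ : AdjoinRoot p ≃ₐ[K] AdjoinRoot p := AlgEquiv.ofAlgHom Ψ₁ Ψ₁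
    (AlgHom.ext fun a => RingHom.congr_fun hL₁L₁ a)
    (AlgHom.ext fun a => RingHom.congr_fun hL₁L₁ a) with hψ₁
  set ψ₂ : AdjoinRoot p ≃ₐ[K] AdjoinRoot p := AlgEquiv.ofAlgHom Ψ₂ Ψ₂
    (AlgHom.ext fun a => RingHom.congr_fun hL₂L₂ a)
    (AlgHom.ext fun a => RingHom.congr_fun hL₂L₂ a) with hψ₂
  have hψ₁a : ∀ a, ψ₁ a = L₁ a := fun _ => rfl
  have hψ₂a : ∀ a, ψ₂ a = L₂ a := fun _ => rfl
  -- nonvanishing facts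
  have hinj : Function.Injective (AdjoinRoot.of p) := (AdjoinRoot.of p).injective
  have hKinj : Function.Injective (algebraMap K (AdjoinRoot p)) :=
    (algebraMap K (AdjoinRoot p)).injective
  have hpinj : Function.Injective (algebraMap K[X] (RatFunc K)) :=
    IsFractionRing.injective K[X] (RatFunc K)
  have h2A : (2 : AdjoinRoot p) ≠ 0 := by
    intro h
    apply h2
    apply hKinj
    rw [map_ofNat, map_zero, h]
  have hvne : v ≠ 0 := by
    intro h
    have h4 : (4 : K) ≠ 0 := by
      intro h4
      apply h2
      have : (4 : K) = 2 * 2 := by norm_num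
      rcases mul_eq_zero.mp (this ▸ h4) with h' | h' <;> exact h'
    have hfne : f ≠ 0 := by
      have : f = algebraMap K[X] (RatFunc K) (4 * X ^ 6 - 12 * X ^ 5 + 21 * X ^ 4
          - 22 * X ^ 3 + 21 * X ^ 2 - 12 * X + 4) := by
        rw [hf]
        simp only [map_add, map_sub, map_mul, map_pow, map_ofNat, RatFunc.algebraMap_X]
      rw [this]
      intro h0
      have h0' := hpinj (h0.trans (map_zero _).symm)
      have := congrArg (Polynomial.eval 0) h0'
      simp at this
      exact h4 this
    apply hfne
    apply hinj
    rw [map_zero, ← hroot, h]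
    ring
  have h2u1 : (2 : AdjoinRoot p) * u - 1 ≠ 0 := by
    intro h
    have : AdjoinRoot.of p (2 * RatFunc.X - 1) = 0 := by
      rw [map_sub, map_mul, map_ofNat, map_one, ← hu]
      exact h
    have h0 : (2 * RatFunc.X - 1 : RatFunc K) = 0 := hinj (by rw [this, map_zero])
    have : (2 * RatFunc.X - 1 : RatFunc K)
        = algebraMap K[X] (RatFunc K) (2 * X - 1) := by
      simp only [map_sub, map_mul, map_ofNat, map_one, RatFunc.algebraMap_X]
    rw [this] at h0
    have h0' := hpinj (h0.trans (map_zero _).symm)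
    have := congrArg (Polynomial.eval 0) h0'
    simp at this
  -- the required properties
  have c1 : ψ₁ u = u := by rw [hψ₁a, hu]; exact hL₁of _
  have c2 : ψ₁ v = -v := by rw [hψ₁a]; exact hL₁v
  have c3 : ψ₂ u = -u + 1 := by
    rw [hψ₂a, hu, hL₂of, hσX, map_sub, map_one]
    ring
  have c4 : ψ₂ v = v := by rw [hψ₂a]; exact hL₂v
  have c5 : ψ₁ * ψ₂ = ψ₂ * ψ₁ := by
    apply AlgEquiv.ext
    intro a
    rw [AlgEquiv.mul_apply, AlgEquiv.mul_apply, hψ₁a, hψ₂a, hψ₁a, hψ₂a]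
    exact RingHom.congr_fun hL₁L₂ a
  haveI : Fact (Nat.Prime 2) := ⟨Nat.prime_two⟩
  have hsq₁ : ψ₁ ^ 2 = 1 := by
    apply AlgEquiv.ext
    intro a
    rw [pow_two, AlgEquiv.mul_apply, AlgEquiv.one_apply, hψ₁a, hψ₁a]
    exact RingHom.congr_fun hL₁L₁ a
  have hsq₂ : ψ₂ ^ 2 = 1 := by
    apply AlgEquiv.ext
    intro a
    rw [pow_two, AlgEquiv.mul_apply, AlgEquiv.one_apply, hψ₂a, hψ₂a]
    exact RingHom.congr_fun hL₂L₂ a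
  have c6 : orderOf ψ₁ = 2 := by
    refine orderOf_eq_prime hsq₁ ?_
    intro h
    have := c2
    rw [h, AlgEquiv.one_apply] at this
    have h0 : (2 : AdjoinRoot p) * v = 0 := by linear_combination this
    rcases mul_eq_zero.mp h0 with h' | h'
    · exact h2A h'
    · exact hvne h'
  have c7 : orderOf ψ₂ = 2 := by
    refine orderOf_eq_prime hsq₂ ?_
    intro h
    have := c3
    rw [h, AlgEquiv.one_apply] at this
    apply h2u1
    linear_combination this
  have d1 : L₁ u = u := by rw [hu]; exact hL₁of _
  have d3 : L₂ u = -u + 1 := by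
    rw [hu, hL₂of, hσX, map_sub, map_one]
    ring
  have c8 : ψ₂ (-u ^ 2 + u) = -u ^ 2 + u := by
    rw [hψ₂a, map_add, map_neg, map_pow, d3]
    ring
  have c10 : v ^ 2 = -4 * (-u ^ 2 + u) ^ 3 + 9 * (-u ^ 2 + u) ^ 2 - 12 * (-u ^ 2 + u) + 4 := by
    rw [hv2]; ring
  have c11 : (ψ₁ * ψ₂) (-u ^ 2 + u) = -u ^ 2 + u := by
    rw [AlgEquiv.mul_apply, c8, hψ₁a, map_add, map_neg, map_pow, d1]
  have c12 : (ψ₁ * ψ₂) (v * (2 * u - 1)) = v * (2 * u - 1) := by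
    have key : L₁ (L₂ (v * (2 * u - 1))) = v * (2 * u - 1) := by
      simp only [map_mul, map_sub, map_one, map_ofNat, map_add, map_neg,
        hL₂v, d3, hL₁v, d1]
      ring
    rw [AlgEquiv.mul_apply, hψ₂a, hψ₁a]
    exact key
  have c13 : (v * (2 * u - 1)) ^ 2 = (-4 * (-u ^ 2 + u) ^ 3 + 9 * (-u ^ 2 + u) ^ 2
      - 12 * (-u ^ 2 + u) + 4) * (-4 * (-u ^ 2 + u) + 1) := by
    rw [mul_pow, hv2]; ring
  exact ⟨ψ₁, ψ₂, c1, c2, c3, c4, c5, c6, c7, c8, c4, c10, c11, c12, c13⟩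
end

section
/- Every group of order 216 that contains a subgroup isomorphic to (S₃ × S₃) ⋊ C₂ (with C₂ swapping the two S₃ factors) and contains no abelian subgroup of order 27 does not exist; equivalently, every group of order 216 containing a subgroup isomorphic to the semidirect product (S₃ × S₃) ⋊ C₂ of order 72 contains an abelian subgroup of order 27. -/
/-- The symmetric group `S₃`. -/
abbrev S3 := Equiv.Perm (Fin 3)

/-- The coordinate-swapping automorphism of `S₃ × S₃`. -/
def swapAut : MulAut (S3 × S3) := (MulEquiv.prodComm : S3 × S3 ≃* S3 × S3)

lemma swapAut_sq : swapAut * swapAut = 1 := by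
  ext x <;> rfl

/-- The action of `C₂` on `S₃ × S₃` swapping the two factors. -/
noncomputable def swapAction : Multiplicative (ZMod 2) →* MulAut (S3 × S3) :=
  AddMonoidHom.toMultiplicativeLeft
    (ZMod.lift 2 ⟨(zmultiplesHom _ : _ ≃ (ℤ →+ Additive (MulAut (S3 × S3))))
        (Additive.ofMul swapAut), by
      have h : swapAut ^ (2 : ℤ) = 1 := by
        rw [zpow_two]; exact swapAut_sq
      exact congrArg Additive.ofMul h⟩)

/-- The group `(S₃ × S₃) ⋊ C₂` of order `72`, with `C₂` swapping the two `S₃` factors. -/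
noncomputable abbrev W72 := SemidirectProduct (S3 × S3) (Multiplicative (ZMod 2)) swapAction


-- computations
lemma swapAction_one : swapAction (Multiplicative.ofAdd (1 : ZMod 2)) = swapAut := by
  have h1 : ((1 : ℤ) : ZMod 2) = (1 : ZMod 2) := by decide
  unfold swapAction
  rw [AddMonoidHom.coe_toMultiplicativeLeft]
  show Additive.toMul (ZMod.lift 2 _ (Multiplicative.toAdd (Multiplicative.ofAdd (1 : ZMod 2)))) = swapAut
  rw [show Multiplicative.toAdd (Multiplicative.ofAdd (1 : ZMod 2)) = ((1:ℤ) : ZMod 2) from h1.symm, ZMod.lift_coe]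
  show Additive.toMul ((1 : ℤ) • Additive.ofMul swapAut) = swapAut
  rw [one_zsmul]
  rfl

lemma zmod2_cases (x : ZMod 2) : x = 0 ∨ x = 1 := by revert x; decide

lemma swapAction_cases (g : Multiplicative (ZMod 2)) :
    swapAction g = 1 ∨ swapAction g = swapAut := by
  rcases zmod2_cases (Multiplicative.toAdd g) with h | h
  · left
    have : g = 1 := by
      have := congrArg Multiplicative.ofAdd h; simpa using this
    rw [this, map_one]
  · right
    have : g = Multiplicative.ofAdd (1 : ZMod 2) := by
      have := congrArg Multiplicative.ofAdd h; simpa using this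
    rw [this, swapAction_one]

open SemidirectProduct

abbrev A3 : Subgroup S3 := alternatingGroup (Fin 3)

instance A3.decMem : DecidablePred (· ∈ A3) := fun x =>
  decidable_of_iff (Equiv.Perm.sign x = 1) (Equiv.Perm.mem_alternatingGroup).symm

noncomputable abbrev Q0 : Subgroup W72 := (A3.prod A3).map (inl : S3 × S3 →* W72)

lemma c3_mem : (finRotate 3 : S3) ∈ A3 := by decide

lemma c3_ne_one : (finRotate 3 : S3) ≠ 1 := by decide

lemma A3_comm : ∀ a ∈ A3, ∀ b ∈ A3, a * b = b * a := by decide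

lemma A3_conj_mem : ∀ x : S3, ∀ a ∈ A3, x * a * x⁻¹ ∈ A3 := by decide

lemma A3_centralizer : ∀ x : S3, (∀ a ∈ A3, x * a * x⁻¹ = a) → x ∈ A3 := by decide

lemma sw_inv : ∀ a ∈ A3, (Equiv.swap 0 1 : S3) * a * (Equiv.swap 0 1 : S3)⁻¹ = a⁻¹ := by decide

lemma card_A3 : Nat.card A3 = 3 := by
  rw [Nat.card_eq_fintype_card]; decide

lemma mem_Q0_iff (w : W72) : w ∈ Q0 ↔ (w.left ∈ A3.prod A3 ∧ w.right = 1) := by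
  constructor
  · rintro ⟨n, hn, rfl⟩
    exact ⟨hn, rfl⟩
  · rintro ⟨h1, h2⟩
    refine ⟨w.left, h1, ?_⟩
    ext <;> simp [h2]

lemma swapAut_mem_prod (n : S3 × S3) (hn : n ∈ A3.prod A3) : swapAut n ∈ A3.prod A3 := by
  obtain ⟨h1, h2⟩ := hn
  exact ⟨h2, h1⟩

lemma prod_conj_mem (x m : S3 × S3) (hm : m ∈ A3.prod A3) : x * m * x⁻¹ ∈ A3.prod A3 := by
  obtain ⟨h1, h2⟩ := hm
  exact ⟨A3_conj_mem x.1 m.1 h1, A3_conj_mem x.2 m.2 h2⟩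

lemma swapAction_mem_prod (g : Multiplicative (ZMod 2)) (m : S3 × S3) (hm : m ∈ A3.prod A3) :
    swapAction g m ∈ A3.prod A3 := by
  rcases swapAction_cases g with h | h <;> rw [h]
  · exact hm
  · exact swapAut_mem_prod m hm

instance Q0_normal : Q0.Normal := by
  constructor
  intro n hn g
  rw [mem_Q0_iff] at hn ⊢
  obtain ⟨h1, h2⟩ := hn
  constructor
  · rw [mul_left, mul_left, inv_left, mul_right, h2, mul_one]
    have hself : g.right⁻¹ = g.right := by
      have : ∀ x : Multiplicative (ZMod 2), x⁻¹ = x := by decide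
      exact this g.right
    have e1 : (swapAction g.right) ((swapAction g.right⁻¹) g.left⁻¹) = g.left⁻¹ := by
      rw [hself]
      rcases swapAction_cases g.right with h | h <;> rw [h]
      · rfl
      · have := congrArg (fun z : MulAut (S3 × S3) => z g.left⁻¹) swapAut_sq
        simpa using this
    rw [e1]
    exact prod_conj_mem g.left _ (swapAction_mem_prod g.right n.left h1)
  · rw [mul_right, mul_right, inv_right, h2, mul_one, mul_inv_cancel]

lemma conj_inl (w : W72) (m : S3 × S3) :
    w * inl m * w⁻¹ = inl (w.left * swapAction w.right m * w.left⁻¹) := by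
  have hself : w.right⁻¹ = w.right := by
    have : ∀ x : Multiplicative (ZMod 2), x⁻¹ = x := by decide
    exact this w.right
  refine SemidirectProduct.ext ?_ ?_
  · rw [mul_left, mul_left, inv_left, mul_right, right_inl, mul_one, hself, left_inl]
    have e1 : (swapAction w.right) ((swapAction w.right) w.left⁻¹) = w.left⁻¹ := by
      rcases swapAction_cases w.right with h | h <;> rw [h]
      · rfl
      · have := congrArg (fun z : MulAut (S3 × S3) => z w.left⁻¹) swapAut_sq
        simpa using this
    rw [mul_assoc, mul_assoc, e1, left_inl]
  · rw [mul_right, mul_right, inv_right, right_inl, mul_one, mul_inv_cancel, right_inl]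

lemma Q0_comm : ∀ x ∈ Q0, ∀ y ∈ Q0, x * y = y * x := by
  rintro _ ⟨n, hn, rfl⟩ _ ⟨m, hm, rfl⟩
  rw [← map_mul, ← map_mul]
  congr 1
  exact Prod.ext (A3_comm n.1 hn.1 m.1 hm.1) (A3_comm n.2 hn.2 m.2 hm.2)

noncomputable abbrev a0 : W72 := inl ((finRotate 3 : S3), 1)
noncomputable abbrev t0 : W72 := inl ((Equiv.swap 0 1 : S3), (Equiv.swap 0 1 : S3))
noncomputable abbrev s0 : W72 := inr (Multiplicative.ofAdd (1 : ZMod 2))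

lemma a0_mem : a0 ∈ Q0 := ⟨_, ⟨c3_mem, one_mem _⟩, rfl⟩

lemma t0_sq : t0 * t0 = 1 := by
  rw [← map_mul]
  have : ((Equiv.swap 0 1 : S3), (Equiv.swap 0 1 : S3)) * ((Equiv.swap 0 1 : S3), (Equiv.swap 0 1 : S3)) = 1 := by decide
  rw [this, map_one]

lemma s0_sq : s0 * s0 = 1 := by
  rw [← map_mul]
  have : (Multiplicative.ofAdd (1 : ZMod 2)) * (Multiplicative.ofAdd (1 : ZMod 2)) = 1 := by decide
  rw [this, map_one]

lemma s0_right_ne : s0.right ≠ 1 := by decide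

lemma t0_conj_a0 : t0 * a0 * t0⁻¹ = a0⁻¹ := by
  rw [conj_inl, ← map_inv]
  have h0 : t0.right = 1 := rfl
  have h1 : t0.left = ((Equiv.swap 0 1 : S3), (Equiv.swap 0 1 : S3)) := rfl
  rw [h0, map_one, h1, inl_inj]
  decide

lemma s0_conj_a0 : s0 * a0 * s0⁻¹ = inl ((1 : S3), (finRotate 3 : S3)) := by
  rw [conj_inl]
  have h1 : s0.left = 1 := rfl
  have h2 : s0.right = Multiplicative.ofAdd (1 : ZMod 2) := rfl
  rw [h1, h2, swapAction_one, one_mul, inv_one, mul_one]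
  rfl

lemma a0_ne_swap : inl ((1 : S3), (finRotate 3 : S3)) ≠ a0 := by
  intro h
  rw [inl_inj] at h
  exact absurd h (by decide)

lemma a0_inv_ne : a0⁻¹ ≠ a0 := by
  intro h
  rw [← map_inv, inl_inj] at h
  exact absurd h (by decide)

lemma zmod2_mul_cases (x : Multiplicative (ZMod 2)) :
    x = 1 ∨ x = Multiplicative.ofAdd (1 : ZMod 2) := by revert x; decide

lemma Q0_centralizer_le : ∀ w : W72, (∀ q ∈ Q0, w * q * w⁻¹ = q) → w ∈ Q0 := by
  intro w hw
  rcases zmod2_mul_cases w.right with hr | hr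
  · rw [mem_Q0_iff]
    refine ⟨⟨?_, ?_⟩, hr⟩
    · apply A3_centralizer
      intro a ha
      have := hw (inl (a, 1)) ⟨(a, 1), ⟨ha, one_mem _⟩, rfl⟩
      rw [conj_inl, hr, map_one, inl_inj] at this
      exact congrArg Prod.fst this
    · apply A3_centralizer
      intro a ha
      have := hw (inl (1, a)) ⟨(1, a), ⟨one_mem _, ha⟩, rfl⟩
      rw [conj_inl, hr, map_one, inl_inj] at this
      exact congrArg Prod.snd this
  · exfalso
    have := hw a0 a0_mem
    rw [conj_inl, hr, swapAction_one, inl_inj] at this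
    have h1 := congrArg Prod.fst this
    have h2 : swapAut ((finRotate 3 : S3), (1:S3)) = ((1:S3), (finRotate 3 : S3)) := rfl
    rw [h2] at h1
    simp at h1
    exact c3_ne_one h1.symm

abbrev V3 := Multiplicative (Fin 2 → ZMod 3)
abbrev M2 := Matrix (Fin 2) (Fin 2) (ZMod 3)
abbrev GL23 := GL (Fin 2) (ZMod 3)

def matAut (m : GL23) : MulAut V3 where
  toFun v := Multiplicative.ofAdd ((m : M2).mulVec v.toAdd)
  invFun v := Multiplicative.ofAdd (((m⁻¹ : GL23) : M2).mulVec v.toAdd)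
  left_inv v := by
    simp only [toAdd_ofAdd, Matrix.mulVec_mulVec]
    rw [show ((m⁻¹ : GL23) : M2) * (m : M2) = 1 by
      rw [← Units.val_mul, inv_mul_cancel, Units.val_one], Matrix.one_mulVec]
    rfl
  right_inv v := by
    simp only [toAdd_ofAdd, Matrix.mulVec_mulVec]
    rw [show (m : M2) * ((m⁻¹ : GL23) : M2) = 1 by
      rw [← Units.val_mul, mul_inv_cancel, Units.val_one], Matrix.one_mulVec]
    rfl
  map_mul' v w := by
    show Multiplicative.ofAdd ((m : M2).mulVec (v.toAdd + w.toAdd)) = _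
    rw [Matrix.mulVec_add]
    rfl

def matGLHom : GL23 →* MulAut V3 where
  toFun := matAut
  map_one' := by
    ext v : 1
    show Multiplicative.ofAdd (((1:GL23) : M2).mulVec v.toAdd) = v
    rw [Units.val_one, Matrix.one_mulVec]
    rfl
  map_mul' m n := by
    ext v : 1
    show Multiplicative.ofAdd (((m*n : GL23) : M2).mulVec v.toAdd) = _
    rw [Units.val_mul, ← Matrix.mulVec_mulVec]
    rfl

-- additive version of an automorphism
def addOf (α : MulAut V3) : (Fin 2 → ZMod 3) →+ (Fin 2 → ZMod 3) :=
  AddMonoidHom.mk' (fun x => (α (Multiplicative.ofAdd x)).toAdd) (fun x y => by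
    have := α.map_mul (Multiplicative.ofAdd x) (Multiplicative.ofAdd y)
    exact congrArg Multiplicative.toAdd this)

def matOf (F : (Fin 2 → ZMod 3) →+ (Fin 2 → ZMod 3)) : M2 :=
  Matrix.of fun i j => F (Pi.single j 1) i

lemma single_eq_smul (j : Fin 2) (c : ZMod 3) :
    (Pi.single j c : Fin 2 → ZMod 3) = c.val • Pi.single j (1 : ZMod 3) := by
  funext k
  by_cases h : k = j
  · subst h
    simp [Pi.single_eq_same, nsmul_eq_mul, mul_one, ZMod.natCast_val, ZMod.cast_id]
  · simp [Pi.single_eq_of_ne h]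

lemma key_lin (F : (Fin 2 → ZMod 3) →+ (Fin 2 → ZMod 3)) (x : Fin 2 → ZMod 3) :
    F x = (matOf F).mulVec x := by
  have hx : x = (Pi.single 0 (x 0) : Fin 2 → ZMod 3) + (Pi.single 1 (x 1) : Fin 2 → ZMod 3) := by
    funext k
    fin_cases k <;> simp
  have lhs : F x = (x 0).val • F (Pi.single 0 1) + (x 1).val • F (Pi.single 1 1) := by
    conv_lhs => rw [hx, map_add, single_eq_smul 0 (x 0), single_eq_smul 1 (x 1),
      map_nsmul, map_nsmul]
  funext i
  rw [lhs]
  show (x 0).val • F (Pi.single 0 1) i + (x 1).val • F (Pi.single 1 1) i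
      = ∑ j : Fin 2, matOf F i j * x j
  rw [Fin.sum_univ_two, nsmul_eq_mul, nsmul_eq_mul, ZMod.natCast_val, ZMod.natCast_val,
    ZMod.cast_id, ZMod.cast_id, mul_comm (matOf F i 0), mul_comm (matOf F i 1)]
  rfl

lemma matGLHom_bijective : Function.Bijective matGLHom := by
  constructor
  · intro m n h
    apply Units.ext
    ext i j
    have h1 := congrArg (fun α : MulAut V3 => (α (Multiplicative.ofAdd (Pi.single j 1))).toAdd i) h
    have h2 : ((m : M2).mulVec (Pi.single j 1)) i = ((n : M2).mulVec (Pi.single j 1)) i := h1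
    rw [Matrix.mulVec_single_one, Matrix.mulVec_single_one] at h2
    exact h2
  · intro α
    set F := addOf α with hF
    set F' := addOf α⁻¹ with hF'
    have hFF' : ∀ x, F (F' x) = x := by
      intro x
      show (α (α⁻¹ (Multiplicative.ofAdd x))).toAdd = x
      rw [show α (α⁻¹ (Multiplicative.ofAdd x)) = Multiplicative.ofAdd x from
        α.apply_symm_apply _]
      rfl
    have hF'F : ∀ x, F' (F x) = x := by
      intro x
      show (α⁻¹ (α (Multiplicative.ofAdd x))).toAdd = x
      rw [show (α⁻¹ : MulAut V3) (α (Multiplicative.ofAdd x)) = Multiplicative.ofAdd x from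
        α.symm_apply_apply _]
      rfl
    have hmul : ∀ (A B : (Fin 2 → ZMod 3) →+ (Fin 2 → ZMod 3)),
        (∀ x, A (B x) = x) → matOf A * matOf B = 1 := by
      intro A B hAB
      ext i j
      have : (matOf A).mulVec ((matOf B).mulVec (Pi.single j 1)) = Pi.single j 1 := by
        rw [← key_lin, ← key_lin, hAB]
      rw [Matrix.mulVec_mulVec] at this
      have h2 := congrArg (fun v => v i) this
      simp only [Matrix.mulVec_single_one, mul_one] at h2
      rw [show ((1 : M2) i j) = (Pi.single j 1 : Fin 2 → ZMod 3) i by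
        simp [Matrix.one_apply, Pi.single_apply, eq_comm]]
      exact h2
    refine ⟨⟨matOf F, matOf F', hmul F F' hFF', hmul F' F hF'F⟩, ?_⟩
    ext v : 1
    show Multiplicative.ofAdd ((matOf F).mulVec v.toAdd) = α v
    rw [← key_lin]
    rfl

lemma GL23_card : Nat.card GL23 = 48 := by
  rw [Matrix.card_GL_field]
  rw [show Fintype.card (ZMod 3) = 3 from rfl]
  decide

lemma sq_det_one : ∀ m : M2, m.det ≠ 0 → (m * m).det = 1 := by decide

lemma invol_classify : ∀ m : M2, m.det ≠ 0 → m * m = 1 → m = 1 ∨ m = -1 ∨ m.det = 2 := by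
  decide

lemma sq_finset_card :
    (((Finset.univ : Finset M2).filter (fun m => m.det ≠ 0)).image (fun m => m * m)).card = 16 := by
  decide

lemma no_invol (K : Subgroup GL23) (hK : Nat.card K = 24) (j : GL23)
    (hjK : j ∈ K) (hdet : ((j : M2)).det = 2) : False := by
  have hind : K.index = 2 := by
    have h := Subgroup.card_mul_index K
    rw [hK, GL23_card] at h
    omega
  have hsq : ∀ g : GL23, g * g ∈ K := fun g => by
    have := Subgroup.sq_mem_of_index_two hind g
    rwa [sq] at this
  set S : Finset M2 :=
    ((Finset.univ : Finset M2).filter (fun m => m.det ≠ 0)).image (fun m => m * m) with hS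
  set T : Finset M2 := S ∪ S.image (fun m => (j : M2) * m) with hT
  have hdet1 : ∀ m ∈ S, m.det = 1 := by
    intro m hm
    rw [hS, Finset.mem_image] at hm
    obtain ⟨b, hb, rfl⟩ := hm
    rw [Finset.mem_filter] at hb
    exact sq_det_one b hb.2
  have hsubT : ∀ m ∈ T, m ∈ (fun k : GL23 => (k : M2)) '' (K : Set GL23) := by
    intro m hm
    rw [hT, Finset.mem_union] at hm
    rcases hm with hm | hm
    · rw [hS, Finset.mem_image] at hm
      obtain ⟨b, hb, rfl⟩ := hm
      rw [Finset.mem_filter] at hb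
      have hu : IsUnit b := by
        rw [Matrix.isUnit_iff_isUnit_det]
        exact (Ne.isUnit hb.2)
      obtain ⟨u, hu⟩ := hu
      exact ⟨u * u, hsq u, by simp [hu]⟩
    · rw [Finset.mem_image] at hm
      obtain ⟨s, hs, rfl⟩ := hm
      rw [hS, Finset.mem_image] at hs
      obtain ⟨b, hb, rfl⟩ := hs
      rw [Finset.mem_filter] at hb
      have hu : IsUnit b := by
        rw [Matrix.isUnit_iff_isUnit_det]
        exact (Ne.isUnit hb.2)
      obtain ⟨u, hu⟩ := hu
      exact ⟨j * (u * u), mul_mem hjK (hsq u), by simp [hu, mul_assoc]⟩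
  have hdisj : Disjoint S (S.image (fun m => (j : M2) * m)) := by
    rw [Finset.disjoint_left]
    intro m hm hm2
    rw [Finset.mem_image] at hm2
    obtain ⟨s, hs, rfl⟩ := hm2
    have h1 := hdet1 _ hm
    have h2 := hdet1 _ hs
    rw [Matrix.det_mul, hdet, h2, mul_one] at h1
    exact absurd h1 (by decide)
  have hTcard : T.card = 32 := by
    rw [hT, Finset.card_union_of_disjoint hdisj,
      Finset.card_image_of_injective _ (j.isUnit.mul_right_injective), sq_finset_card]
  have hle : T.card ≤ Nat.card K := by
    have h1 : (T : Set M2) ⊆ (fun k : GL23 => (k : M2)) '' (K : Set GL23) := fun m hm =>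
      hsubT m hm
    have h2 := Set.ncard_le_ncard h1 (Set.toFinite _)
    rw [Set.ncard_coe_finset] at h2
    rw [Set.ncard_image_of_injective _ (fun a b h => Units.ext h)] at h2
    rwa [← Nat.card_coe_set_eq, SetLike.coe_sort_coe] at h2
  rw [hTcard, hK] at hle
  omega

set_option maxHeartbeats 1000000

lemma W72_card : Nat.card W72 = 72 := by
  have eqv : W72 ≃ (S3 × S3) × Multiplicative (ZMod 2) :=
    { toFun := fun w => (w.left, w.right)
      invFun := fun p => ⟨p.1, p.2⟩
      left_inv := fun w => rfl
      right_inv := fun p => rfl }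
  rw [Nat.card_congr eqv, Nat.card_prod, Nat.card_eq_fintype_card, Nat.card_eq_fintype_card]
  decide

lemma card_V3 : Nat.card V3 = 9 := by
  rw [Nat.card_eq_fintype_card]
  decide

lemma subgroup_eq_of_le_of_card_le {G : Type*} [Group G] {A B : Subgroup G}
    (h : A ≤ B) (hfin : (B : Set G).Finite) (hc : Nat.card B ≤ Nat.card A) : A = B := by
  apply SetLike.coe_injective
  apply Set.eq_of_subset_of_ncard_le h ?_ hfin
  rwa [← Nat.card_coe_set_eq, ← Nat.card_coe_set_eq, SetLike.coe_sort_coe,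
    SetLike.coe_sort_coe]


/-- Every group of order `216` containing a subgroup isomorphic to the
semidirect product `(S₃ × S₃) ⋊ C₂` of order `72` contains an abelian subgroup of
order `27`. -/
theorem stmt_18 (G : Type*) [Group G] [Fintype G] (hG : Fintype.card G = 216)
    (H : Subgroup G) (hH : Nonempty (H ≃* W72)) :
    ∃ A : Subgroup G, Nat.card A = 27 ∧ ∀ x ∈ A, ∀ y ∈ A, x * y = y * x := by
  classical
  obtain ⟨e⟩ := hH
  haveI : Fact (Nat.Prime 3) := ⟨Nat.prime_three⟩
  have hcardG : Nat.card G = 216 := by rw [Nat.card_eq_fintype_card, hG]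
  have hcardH : Nat.card H = 72 := by rw [Nat.card_congr e.toEquiv, W72_card]
  set SQ : Subgroup ↥H := Q0.comap (e : ↥H →* W72) with hSQ
  set Q : Subgroup G := SQ.map H.subtype with hQdef
  have hQle : Q ≤ H := by
    rintro x ⟨y, _, rfl⟩
    exact y.2
  have hmapSQ : SQ.map (e : ↥H →* W72) = Q0 :=
    Subgroup.map_comap_eq_self_of_surjective e.surjective Q0
  have hmemQ : ∀ y : ↥H, ((y : G) ∈ Q ↔ e y ∈ Q0) := by
    intro y
    constructor
    · rintro ⟨z, hz, hzy⟩
      have : z = y := Subtype.ext hzy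
      subst this
      exact hz
    · intro hy
      exact ⟨y, hy, rfl⟩
  -- the isomorphism ψ : Q ≃* V3
  let eQSQ : ↥Q ≃* ↥SQ := (Subgroup.equivMapOfInjective SQ H.subtype
    (Subgroup.subtype_injective H)).symm
  let eSQQ0 : ↥SQ ≃* ↥Q0 := (e.subgroupMap SQ).trans (MulEquiv.subgroupCongr hmapSQ)
  let eQ0prod : ↥Q0 ≃* ↥(A3.prod A3) :=
    (Subgroup.equivMapOfInjective (A3.prod A3) (inl : S3 × S3 →* W72) inl_injective).symm
  let eprod : ↥(A3.prod A3) ≃* ↥A3 × ↥A3 := Subgroup.prodEquiv A3 A3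
  have hZ3card : Nat.card (Multiplicative (ZMod 3)) = 3 := by
    rw [Nat.card_eq_fintype_card]; decide
  let ψA : ↥A3 ≃* Multiplicative (ZMod 3) := mulEquivOfPrimeCardEq (p := 3) card_A3 hZ3card
  let ψ2 : Multiplicative (ZMod 3) × Multiplicative (ZMod 3) ≃* V3 :=
    { toFun := fun p => Multiplicative.ofAdd ![p.1.toAdd, p.2.toAdd]
      invFun := fun v => (Multiplicative.ofAdd (v.toAdd 0), Multiplicative.ofAdd (v.toAdd 1))
      left_inv := fun p => by simp
      right_inv := fun v => by
        show Multiplicative.ofAdd _ = v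
        apply congrArg Multiplicative.ofAdd
        funext i
        fin_cases i <;> rfl
      map_mul' := fun p q => by
        show Multiplicative.ofAdd _ = Multiplicative.ofAdd _
        apply congrArg Multiplicative.ofAdd
        funext i
        fin_cases i <;> rfl }
  let ψ : ↥Q ≃* V3 :=
    eQSQ.trans (eSQQ0.trans (eQ0prod.trans (eprod.trans ((ψA.prodCongr ψA).trans ψ2))))
  have hQcard : Nat.card Q = 9 := by rw [Nat.card_congr ψ.toEquiv, card_V3]
  -- Q is abelian
  have hQcomm : ∀ x ∈ Q, ∀ y ∈ Q, x * y = y * x := by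
    rintro _ ⟨x, hx, rfl⟩ _ ⟨y, hy, rfl⟩
    rw [← map_mul, ← map_mul]
    apply congrArg
    apply e.injective
    rw [map_mul, map_mul]
    exact Q0_comm _ hx _ hy
  -- H normalizes Q
  have hconjH : ∀ h ∈ H, ∀ q ∈ Q, h * q * h⁻¹ ∈ Q := by
    rintro h hh _ ⟨q, hq, rfl⟩
    have hmem : (⟨h, hh⟩ : ↥H) * q * (⟨h, hh⟩ : ↥H)⁻¹ ∈ SQ := by
      show e _ ∈ Q0
      rw [map_mul, map_mul, map_inv]
      exact Q0_normal.conj_mem _ hq _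
    exact ⟨_, hmem, rfl⟩
  have hHnorm : H ≤ (Subgroup.normalizer (Q : Set G)) := by
    intro h hh
    rw [Subgroup.mem_normalizer_iff]
    intro g
    constructor
    · intro hg
      exact hconjH h hh g hg
    · intro hg
      have := hconjH h⁻¹ (inv_mem hh) _ hg
      simpa [mul_assoc] using this
  -- Sylow theory
  have hQp : IsPGroup 3 ↥Q := IsPGroup.of_card (n := 2) (by rw [hQcard]; norm_num)
  obtain ⟨P, hQP⟩ := hQp.exists_le_sylow
  have hPcard : Nat.card ↥(P : Subgroup G) = 27 := by
    rw [P.card_eq_multiplicity, hcardG]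
    rw [show ((216 : ℕ).factorization 3) = 3 by
      rw [show (216 : ℕ) = 2 ^ 3 * 3 ^ 3 by norm_num,
        Nat.factorization_mul (by norm_num) (by norm_num)]
      rw [Nat.Prime.factorization_pow Nat.prime_two, Nat.Prime.factorization_pow Nat.prime_three]
      simp [Finsupp.add_apply, Finsupp.single_apply]]
    norm_num
  -- P normalizes Q
  have hPnorm : (P : Subgroup G) ≤ (Subgroup.normalizer (Q : Set G)) := by
    have hQP' : Q ≤ (P : Subgroup G) := hQP
    set Q'' : Subgroup ↥(P : Subgroup G) := Q.subgroupOf (P : Subgroup G) with hQ''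
    have hQ''card : Nat.card Q'' = 9 := by
      rw [Nat.card_congr (Subgroup.subgroupOfEquivOfLe hQP').toEquiv, hQcard]
    haveI hPnil : Group.IsNilpotent ↥(P : Subgroup G) := P.isPGroup'.isNilpotent
    have hNC := normalizerCondition_of_isNilpotent (G := ↥(P : Subgroup G))
    have hQ''ne : Q'' ≠ ⊤ := by
      intro htop
      rw [htop, Subgroup.card_top, hPcard] at hQ''card
      norm_num at hQ''card
    have hlt := hNC Q'' (lt_top_iff_ne_top.mpr hQ''ne)
    have hNtop'' : (Subgroup.normalizer (Q'' : Set ↥(P : Subgroup G))) = ⊤ := by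
      have hdvd : Nat.card (Subgroup.normalizer (Q'' : Set ↥(P : Subgroup G))) ∣ 27 := by
        rw [← hPcard, ← Subgroup.card_top (G := ↥(P : Subgroup G))]
        exact Subgroup.card_dvd_of_le le_top
      have h9 : (9 : ℕ) ∣ Nat.card (Subgroup.normalizer (Q'' : Set ↥(P : Subgroup G))) := by
        rw [← hQ''card]
        exact Subgroup.card_dvd_of_le hlt.le
      have hne : Nat.card (Subgroup.normalizer (Q'' : Set ↥(P : Subgroup G))) ≠ 9 := by
        intro h9'
        have heq : Q'' = (Subgroup.normalizer (Q'' : Set ↥(P : Subgroup G))) := by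
          apply subgroup_eq_of_le_of_card_le hlt.le (Set.toFinite _)
          rw [h9', hQ''card]
        exact absurd heq (ne_of_lt hlt)
      have hle27 : Nat.card (Subgroup.normalizer (Q'' : Set ↥(P : Subgroup G))) ≤ 27 := Nat.le_of_dvd (by norm_num) hdvd
      obtain ⟨k, hk⟩ := h9
      have hpos : 0 < Nat.card (Subgroup.normalizer (Q'' : Set ↥(P : Subgroup G))) := Nat.card_pos
      have hcases : Nat.card (Subgroup.normalizer (Q'' : Set ↥(P : Subgroup G))) = 18 ∨ Nat.card (Subgroup.normalizer (Q'' : Set ↥(P : Subgroup G))) = 27 := by omega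
      have h27 : Nat.card (Subgroup.normalizer (Q'' : Set ↥(P : Subgroup G))) = 27 := by
        rcases hcases with h | h
        · rw [h] at hdvd
          norm_num at hdvd
        · exact h
      apply Subgroup.eq_top_of_card_eq
      rw [h27, hPcard]
    intro p hp
    rw [Subgroup.mem_normalizer_iff]
    intro g
    have key : ∀ x ∈ (P : Subgroup G), ∀ q ∈ Q, x * q * x⁻¹ ∈ Q := by
      intro x hx q hq
      have hqP : q ∈ (P : Subgroup G) := hQP' hq
      have hmem : (⟨x, hx⟩ : ↥(P : Subgroup G)) ∈ (Subgroup.normalizer (Q'' : Set ↥(P : Subgroup G))) := by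
        rw [hNtop'']; trivial
      rw [Subgroup.mem_normalizer_iff] at hmem
      have h2 := (hmem ⟨q, hqP⟩).mp (by rwa [Subgroup.mem_subgroupOf])
      rwa [Subgroup.mem_subgroupOf] at h2
    constructor
    · intro hg
      exact key p hp g hg
    · intro hg
      have := key p⁻¹ (inv_mem hp) _ hg
      simpa [mul_assoc] using this
  -- Q is normal in G
  have hNtop : (Subgroup.normalizer (Q : Set G)) = ⊤ := by
    apply Subgroup.eq_top_of_card_eq
    have h72 : (72 : ℕ) ∣ Nat.card (Subgroup.normalizer (Q : Set G)) := by
      rw [← hcardH]; exact Subgroup.card_dvd_of_le hHnorm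
    have h27 : (27 : ℕ) ∣ Nat.card (Subgroup.normalizer (Q : Set G)) := by
      rw [← hPcard]; exact Subgroup.card_dvd_of_le hPnorm
    have h216 : (216 : ℕ) ∣ Nat.card (Subgroup.normalizer (Q : Set G)) := by
      have hl := Nat.lcm_dvd h72 h27
      have hlcm : Nat.lcm 72 27 = 216 := by norm_num [Nat.lcm]
      rwa [hlcm] at hl
    have hdvd : Nat.card (Subgroup.normalizer (Q : Set G)) ∣ 216 := by
      rw [← hcardG, ← Subgroup.card_top (G := G)]
      exact Subgroup.card_dvd_of_le le_top
    rw [hcardG]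
    exact Nat.dvd_antisymm hdvd h216
  haveI hQnormal : Q.Normal := Subgroup.normalizer_eq_top_iff.mp hNtop
  -- the centralizer C of Q
  set C : Subgroup G := Subgroup.centralizer (Q : Set G) with hC
  have hQC : Q ≤ C := by
    intro q hq
    rw [Subgroup.mem_centralizer_iff]
    intro y hy
    exact hQcomm y hy q hq
  have hCH : C ⊓ H = Q := by
    apply le_antisymm
    · rintro x ⟨hxC, hxH⟩
      have hcent : ∀ q0 ∈ Q0, (e ⟨x, hxH⟩) * q0 * (e ⟨x, hxH⟩)⁻¹ = q0 := by
        intro q0 hq0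
        have hq' : ((e.symm q0 : ↥H) : G) ∈ Q := by
          rw [hmemQ, e.apply_symm_apply]
          exact hq0
        have hcomm := (Subgroup.mem_centralizer_iff.mp hxC) _ hq'
        have hHeq : (e.symm q0) * ⟨x, hxH⟩ = ⟨x, hxH⟩ * (e.symm q0) := by
          apply Subtype.ext
          exact hcomm
        have happ := congrArg e hHeq
        rw [map_mul, map_mul, e.apply_symm_apply] at happ
        rw [← happ]
        group
      have hw := Q0_centralizer_le _ (fun q0 hq0 => hcent q0 hq0)
      rw [← hmemQ ⟨x, hxH⟩] at hw
      exact hw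
    · exact le_inf hQC hQle
  haveI hCnormal : C.Normal := by
    constructor
    intro c hc g
    rw [Subgroup.mem_centralizer_iff]
    intro q hq
    have hq' : g⁻¹ * q * g ∈ Q := by
      have := hQnormal.conj_mem q hq g⁻¹
      simpa using this
    have hcq := Subgroup.mem_centralizer_iff.mp hc _ hq'
    have hgoal : q * (g * c * g⁻¹) = g * ((g⁻¹ * q * g) * c) * g⁻¹ := by group
    rw [hgoal, hcq]
    group
  -- cardinality of C
  have h9C : (9 : ℕ) ∣ Nat.card C := by
    rw [← hQcard]; exact Subgroup.card_dvd_of_le hQC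
  have hrel : C.relIndex H = 8 := by
    have h0 : C.relIndex H = Q.relIndex H := by
      rw [← hCH, Subgroup.inf_relIndex_right]
    have h1 : Nat.card (Q.subgroupOf H) = 9 := by
      rw [Nat.card_congr (Subgroup.subgroupOfEquivOfLe hQle).toEquiv, hQcard]
    have h2 := Subgroup.card_mul_index (Q.subgroupOf H)
    rw [h1, hcardH] at h2
    rw [h0]
    show (Q.subgroupOf H).index = 8
    omega
  have h8 : (8 : ℕ) ∣ C.index := by
    rw [← hrel]
    exact Subgroup.relIndex_dvd_index_of_normal C H
  have hCi := Subgroup.card_mul_index C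
  rw [hcardG] at hCi
  obtain ⟨k, hk⟩ := h8
  obtain ⟨m, hm⟩ := h9C
  have h72mk : 72 * (m * k) = 216 := by
    calc 72 * (m * k) = (9 * m) * (8 * k) := by ring
    _ = 216 := by rw [← hm, ← hk]; exact hCi
  have hmk : m * k = 3 := by omega
  have hm13 : m = 1 ∨ m = 3 :=
    Nat.Prime.eq_one_or_self_of_dvd Nat.prime_three m ⟨k, hmk.symm⟩
  rcases hm13 with hm1 | hm3
  · -- card C = 9 : contradiction via GL(2,3)
    exfalso
    have hC9 : Nat.card C = 9 := by rw [hm, hm1, mul_one]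
    have hCQ : Q = C := by
      apply subgroup_eq_of_le_of_card_le hQC (Set.toFinite _)
      rw [hC9, hQcard]
    let matGLEquiv : GL23 ≃* MulAut V3 := MulEquiv.ofBijective matGLHom matGLHom_bijective
    let ρ : G →* GL23 := matGLEquiv.symm.toMonoidHom.comp
      ((MulAut.congr ψ).toMonoidHom.comp (MulAut.conjNormal (H := Q)))
    have hkerρ : ∀ g, ρ g = 1 ↔ g ∈ C := by
      intro g
      have h1 : ρ g = 1 ↔ (MulAut.conjNormal g : MulAut ↥Q) = 1 := by
        rw [show ρ g = matGLEquiv.symm ((MulAut.congr ψ) (MulAut.conjNormal g)) from rfl,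
          MulEquiv.map_eq_one_iff, MulEquiv.map_eq_one_iff]
      rw [h1]
      constructor
      · intro h
        rw [Subgroup.mem_centralizer_iff]
        intro q hq
        have := congrArg (fun α : MulAut ↥Q => ((α ⟨q, hq⟩ : ↥Q) : G)) h
        simp only [MulAut.conjNormal_apply, MulAut.one_apply] at this
        -- this : g * q * g⁻¹ = q
        have hqg : g * q = q * g := by
          calc g * q = (g * q * g⁻¹) * g := by group
          _ = q * g := by rw [this]
        exact hqg.symm
      · intro h
        apply MulEquiv.ext
        intro q
        apply Subtype.ext
        show g * (q : G) * g⁻¹ = (q : G)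
        have hcomm := Subgroup.mem_centralizer_iff.mp h _ q.2
        calc g * (q : G) * g⁻¹ = ((q : G) * g) * g⁻¹ := by rw [← hcomm]
        _ = (q : G) := by group
    have hkerC : ρ.ker = C := by
      ext g
      rw [MonoidHom.mem_ker]
      exact hkerρ g
    have hKcard : Nat.card ρ.range = 24 := by
      have h1 := Nat.card_congr (QuotientGroup.quotientKerEquivRange ρ).toEquiv
      have h2 := Subgroup.card_eq_card_quotient_mul_card_subgroup ρ.ker
      have h3 : Nat.card ρ.ker = 9 := by rw [hkerC, hC9]
      rw [hcardG, h3] at h2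
      omega
    -- the two involutions
    set σg : G := ((e.symm s0 : ↥H) : G) with hσg
    set τg : G := ((e.symm t0 : ↥H) : G) with hτg
    have hσsq : σg * σg = 1 := by
      have h' : (e.symm s0) * (e.symm s0) = 1 := by rw [← map_mul, s0_sq, map_one]
      rw [hσg, ← Subgroup.coe_mul, h', Subgroup.coe_one]
    have hτsq : τg * τg = 1 := by
      have h' : (e.symm t0) * (e.symm t0) = 1 := by rw [← map_mul, t0_sq, map_one]
      rw [hτg, ← Subgroup.coe_mul, h', Subgroup.coe_one]
    have hmemC_iff : ∀ y : ↥H, ((y : G) ∈ C ↔ e y ∈ Q0) := by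
      intro y
      rw [← hCQ]
      exact hmemQ y
    have hσnot : σg ∉ C := by
      rw [hσg, hmemC_iff (e.symm s0), e.apply_symm_apply, mem_Q0_iff]
      rintro ⟨-, habs⟩
      exact s0_right_ne habs
    have haginQ : ((e.symm a0 : ↥H) : G) ∈ Q := by
      rw [hmemQ, e.apply_symm_apply]
      exact a0_mem
    have hτnot : τg ∉ C := by
      intro hmem
      have hcomm := Subgroup.mem_centralizer_iff.mp hmem _ haginQ
      -- hcomm : ag * τg = τg * ag in G
      have hH2 : (e.symm a0) * (e.symm t0) = (e.symm t0) * (e.symm a0) := by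
        apply Subtype.ext
        exact hcomm
      have := congrArg e hH2
      rw [map_mul, map_mul, e.apply_symm_apply, e.apply_symm_apply] at this
      -- this : a0 * t0 = t0 * a0
      have habs : t0 * a0 * t0⁻¹ = a0 := by
        rw [← this]
        group
      rw [t0_conj_a0] at habs
      exact a0_inv_ne habs
    have hστnot : σg * τg⁻¹ ∉ C := by
      rw [hσg, hτg, ← Subgroup.coe_inv, ← Subgroup.coe_mul, hmemC_iff, map_mul, map_inv,
        e.apply_symm_apply, e.apply_symm_apply, mem_Q0_iff]
      rintro ⟨-, habs⟩
      rw [mul_right, inv_right] at habs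
      have : (s0.right * t0.right⁻¹) = Multiplicative.ofAdd (1 : ZMod 2) := rfl
      rw [this] at habs
      exact absurd habs (by decide)
    have h1σ : ρ σg ≠ 1 := fun h => hσnot ((hkerρ _).mp h)
    have h1τ : ρ τg ≠ 1 := fun h => hτnot ((hkerρ _).mp h)
    have hστne : ρ σg ≠ ρ τg := by
      intro h
      have : ρ (σg * τg⁻¹) = 1 := by
        rw [map_mul, map_inv, h, mul_inv_cancel]
      exact hστnot ((hkerρ _).mp this)
    -- determinant analysis
    have hdet_ne : ∀ g : G, ((ρ g : GL23) : M2).det ≠ 0 := by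
      intro g
      have : IsUnit ((ρ g : GL23) : M2) := ⟨ρ g, rfl⟩
      rw [Matrix.isUnit_iff_isUnit_det] at this
      exact this.ne_zero
    have hvalσ : ((ρ σg : GL23) : M2) * ((ρ σg : GL23) : M2) = 1 := by
      have := congrArg (fun u : GL23 => (u : M2)) (by rw [← map_mul, hσsq, map_one] :
        ρ σg * ρ σg = 1)
      simpa using this
    have hvalτ : ((ρ τg : GL23) : M2) * ((ρ τg : GL23) : M2) = 1 := by
      have := congrArg (fun u : GL23 => (u : M2)) (by rw [← map_mul, hτsq, map_one] :
        ρ τg * ρ τg = 1)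
      simpa using this
    have hclσ := invol_classify _ (hdet_ne σg) hvalσ
    have hclτ := invol_classify _ (hdet_ne τg) hvalτ
    have hne1σ : ((ρ σg : GL23) : M2) ≠ 1 := by
      intro h
      exact h1σ (Units.ext h)
    have hne1τ : ((ρ τg : GL23) : M2) ≠ 1 := by
      intro h
      exact h1τ (Units.ext h)
    have hj : ∃ j : GL23, j ∈ ρ.range ∧ ((j : M2)).det = 2 := by
      rcases hclσ with h | h | h
      · exact absurd h hne1σ
      · rcases hclτ with h' | h' | h'
        · exact absurd h' hne1τ
        · exfalso
          apply hστne
          apply Units.ext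
          rw [h, h']
        · exact ⟨ρ τg, ⟨τg, rfl⟩, h'⟩
      · exact ⟨ρ σg, ⟨σg, rfl⟩, h⟩
    obtain ⟨j, hjmem, hjdet⟩ := hj
    exact no_invol ρ.range hKcard j hjmem hjdet
  · -- card C = 27 : C is the abelian subgroup
    have hC27 : Nat.card C = 27 := by rw [hm, hm3]
    refine ⟨C, hC27, ?_⟩
    -- Q is contained in the center of C
    have hcenter : ∀ x : ↥Q, (⟨(x : G), hQC x.2⟩ : ↥C) ∈ Subgroup.center ↥C := by
      intro x
      rw [Subgroup.mem_center_iff]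
      intro g
      apply Subtype.ext
      show (g : G) * x = x * g
      exact (Subgroup.mem_centralizer_iff.mp g.2 _ x.2).symm
    have hZ9 : 9 ≤ Nat.card (Subgroup.center ↥C) := by
      rw [← hQcard]
      apply Nat.card_le_card_of_injective
        (fun x : ↥Q => (⟨⟨(x : G), hQC x.2⟩, hcenter x⟩ : ↥(Subgroup.center ↥C)))
      intro a b hab
      apply Subtype.ext
      simpa using congrArg (fun z : ↥(Subgroup.center ↥C) => ((z : ↥C) : G)) hab
    have hq := Subgroup.card_eq_card_quotient_mul_card_subgroup (Subgroup.center ↥C)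
    rw [hC27] at hq
    set z := Nat.card (Subgroup.center ↥C)
    set qc := Nat.card (↥C ⧸ Subgroup.center ↥C)
    have hqle : qc ≤ 3 := by nlinarith
    have hqne : qc ≠ 0 := by
      intro h
      rw [h] at hq
      norm_num at hq
    have hq13 : qc = 1 ∨ qc = 3 := by
      interval_cases qc <;> omega
    have hcyc : IsCyclic (↥C ⧸ Subgroup.center ↥C) := by
      rcases hq13 with h | h
      · haveI : Subsingleton (↥C ⧸ Subgroup.center ↥C) := (Nat.card_eq_one_iff_unique.mp h).1
        infer_instance
      · exact isCyclic_of_prime_card (p := 3) h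
    haveI := hcyc
    have hcomm' : ∀ a b : ↥C, a * b = b * a := by
      apply commutative_of_cyclic_center_quotient (QuotientGroup.mk' (Subgroup.center ↥C))
      rw [QuotientGroup.ker_mk']
    intro x hx y hy
    have := hcomm' ⟨x, hx⟩ ⟨y, hy⟩
    exact congrArg Subtype.val this
end
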